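/- arXiv:2104.10821 — 10 statements merged into one kernel-verified Lean document; each statement's English description precedes it below -/
import Mathlib

section
/- For ε ∈ {0,1}, r ≥ 1, M ∈ ε + 2ℕ, a_* ∈ 𝔖_r^M, and t ≥ a_M, the sequence a_*^{!t} (obtained from 0,0,1,1,...,t,t by removing two entries t - a for each value a appearing twice in a_*, and one entry t - a for each value a appearing exactly once) has M' = 2(t+1) - M entries whose sum equals r + (M'² - 2M' + ε)/4, i.e., a_*^{!t} ∈ 𝔖_r^{M'}. -/
/-- 𝔗_r^m : strictly increasing length-m sequences of naturals summing to r + m(m-1)/2. -/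
def TT (r m : ℕ) : Set (List ℕ) :=
  {l | l.length = m ∧ l.Pairwise (· < ·) ∧ l.sum = r + m * (m - 1) / 2}

/-- Complement of `l` in `{0,1,...,t}`: remove `t - a` for each entry `a` of `l`. -/
def complA (t : ℕ) (l : List ℕ) : List ℕ :=
  (List.range (t + 1)).filter (fun x => decide ((t - x) ∉ l))

/-- 𝔖_r^M (for given ε): weakly increasing length-M sequences, each value occurring
at most twice, with sum r + (M² - 2M + ε)/4. -/
def SS (r M ε : ℕ) : Set (List ℕ) :=
  {l | l.length = M ∧ l.Pairwise (· ≤ ·) ∧ (∀ x, l.count x ≤ 2) ∧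
    l.sum = r + (M ^ 2 - 2 * M + ε) / 4}

/-- Complement of `l` in the multiset `{0,0,1,1,...,t,t}`, as a sorted list. -/
def complB (t : ℕ) (l : List ℕ) : List ℕ :=
  (List.range (t + 1)).flatMap (fun x => List.replicate (2 - l.count (t - x)) x)

/-- Subtract 1 from each of the last `k` entries. -/
def decLast (k : ℕ) (l : List ℕ) : List ℕ :=
  l.take (l.length - k) ++ (l.drop (l.length - k)).map (fun x => x - 1)

def InducedT (r : ℕ) (l l' : List ℕ) : Prop :=
  ∃ k₀, 1 ≤ k₀ ∧ k₀ ≤ r ∧ decLast k₀ l ∈ TT (r - k₀) l.length ∧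
    decLast k₀ l' ∈ TT (r - k₀) l'.length

def InducedS (r ε : ℕ) (l l' : List ℕ) : Prop :=
  ∃ k₀, 1 ≤ k₀ ∧ k₀ ≤ r ∧ decLast k₀ l ∈ SS (r - k₀) l.length ε ∧
    decLast k₀ l' ∈ SS (r - k₀) l'.length ε

def shA (l : List ℕ) : List ℕ := 0 :: l.map (· + 1)
def shS (l : List ℕ) : List ℕ := 0 :: 0 :: l.map (· + 1)

def EquivA (l l' : List ℕ) : Prop := ∃ i j, shA^[i] l = shA^[j] l'
def EquivS (l l' : List ℕ) : Prop := ∃ i j, shS^[i] l = shS^[j] l'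

def PairEquivA (p q : List ℕ × List ℕ) : Prop :=
  ∃ i j, shA^[i] p.1 = shA^[j] q.1 ∧ shA^[i] p.2 = shA^[j] q.2
def PairEquivS (p q : List ℕ × List ℕ) : Prop :=
  ∃ i j, shS^[i] p.1 = shS^[j] q.1 ∧ shS^[i] p.2 = shS^[j] q.2

/-- The pattern: entries (a, a+p) in `l` and (a+1, a+p-1) in `l'` at the same
consecutive positions, all other entries equal. -/
def PairP (p : ℕ) (l l' : List ℕ) : Prop :=
  ∃ a u v, l = u ++ [a, a + p] ++ v ∧ l' = u ++ [a + 1, a + p - 1] ++ v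

/-- (b, b+2, b+3, ..., b+p-2, b+p) -/
def listA (p b : ℕ) : List ℕ :=
  (b :: (List.range (p - 3)).map (fun i => b + 2 + i)) ++ [b + p]
/-- (b+1, b+2, ..., b+p-1) -/
def listA' (p b : ℕ) : List ℕ :=
  (List.range (p - 1)).map (fun i => b + 1 + i)

/-- (b, b+1, b+2, b+2, ..., b+p-2, b+p-2, b+p-1, b+p) -/
def listB (p b : ℕ) : List ℕ :=
  b :: (b + 1) :: ((List.range (p - 3)).flatMap fun i => [b + 2 + i, b + 2 + i]) ++
    [b + p - 1, b + p]
/-- (b+1, b+1, b+2, b+2, ..., b+p-1, b+p-1) -/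
def listB' (p b : ℕ) : List ℕ :=
  (List.range (p - 1)).flatMap fun i => [b + 1 + i, b + 1 + i]

/-- The multiset of parts (a_i - i), zero parts removed. -/
def partsOf (l : List ℕ) : Multiset ℕ :=
  ↑((l.zipIdx.map fun p => p.1 - p.2).filter fun x => decide (x ≠ 0))

/-- Conjugate (transpose) of a multiset of parts. -/
def conjParts (s : Multiset ℕ) : Multiset ℕ :=
  Multiset.filter (fun x => x ≠ 0)
    ↑((List.range s.sum).map fun j => Multiset.card (Multiset.filter (fun x => j + 1 ≤ x) s))

-- auxiliary lemmas


lemma sum_flatMap' (f : ℕ → List ℕ) (L : List ℕ) :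
    (L.flatMap f).sum = (L.map fun a => (f a).sum).sum := by
  induction L with
  | nil => simp
  | cons b tl ih => simp [List.flatMap_cons, ih]

lemma listsum_eq (f : ℕ → ℕ) (n : ℕ) :
    ((List.range n).map f).sum = ∑ i ∈ Finset.range n, f i := rfl

lemma count_range_sum (t : ℕ) (l : List ℕ) (h : ∀ x ∈ l, x ≤ t) :
    ∑ a ∈ Finset.range (t+1), l.count a = l.length := by
  induction l with
  | nil => simp
  | cons b tl ih =>
    have hb : b ∈ Finset.range (t+1) := Finset.mem_range.2 (Nat.lt_succ_of_le (h b (by simp)))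
    have h' := ih (fun x hx => h x (List.mem_cons_of_mem _ hx))
    simp only [List.count_cons, List.length_cons, beq_iff_eq]
    rw [Finset.sum_add_distrib, h']
    congr 1
    rw [Finset.sum_ite_eq (Finset.range (t+1)) b (fun _ => 1), if_pos hb]

lemma weight_range_sum (t : ℕ) (l : List ℕ) (h : ∀ x ∈ l, x ≤ t) :
    ∑ a ∈ Finset.range (t+1), a * l.count a = l.sum := by
  induction l with
  | nil => simp
  | cons b tl ih =>
    have hb : b ∈ Finset.range (t+1) := Finset.mem_range.2 (Nat.lt_succ_of_le (h b (by simp)))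
    have h' := ih (fun x hx => h x (List.mem_cons_of_mem _ hx))
    simp only [List.count_cons, List.sum_cons, beq_iff_eq, Nat.mul_add, mul_ite, mul_one, mul_zero]
    rw [Finset.sum_add_distrib, h']
    rw [Finset.sum_ite_eq (Finset.range (t+1)) b (fun x => x), if_pos hb]
    omega

lemma sortedFlat (c : ℕ → ℕ) (n : ℕ) :
    List.Pairwise (· ≤ ·) ((List.range n).flatMap fun x => List.replicate (c x) x) := by
  induction n with
  | zero => simp
  | succ n ih =>
    rw [List.range_succ, List.flatMap_append]
    simp only [List.flatMap_cons, List.flatMap_nil, List.append_nil]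
    rw [List.pairwise_append]
    refine ⟨ih, List.pairwise_replicate.2 (Or.inr le_rfl), ?_⟩
    intro x hx y hy
    obtain ⟨a, ha, hxa⟩ := List.mem_flatMap.1 hx
    rw [List.eq_of_mem_replicate hxa, List.eq_of_mem_replicate hy]
    exact le_of_lt (List.mem_range.1 ha)

lemma keyId0 (t n m : ℕ) (h : n + m = t + 1) :
    t*(t+1) + n^2 + m = 2*(t*n) + m^2 + n := by
  have h' : (n:ℤ) + m = t + 1 := by exact_mod_cast h
  have : (t:ℤ)*(t+1) + n^2 + m = 2*(t*n) + m^2 + n := by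
    linear_combination (-(t:ℤ) + n - m) * h'
  exact_mod_cast this

lemma keyId1 (t n m : ℕ) (h : n + m = t) :
    t*(t+1) + n^2 = m^2 + 2*(t*n) + t := by
  have h' : (n:ℤ) + m = t := by exact_mod_cast h
  have : (t:ℤ)*(t+1) + n^2 = m^2 + 2*(t*n) + t := by
    linear_combination (-(t:ℤ) + n - m) * h'
  exact_mod_cast this

lemma finalArith (r t ε n sumB W S : ℕ) (hε : ε ≤ 1) (hr : 1 ≤ r)
    (hMle : ε + 2*n ≤ 2*(t+1))
    (h3 : sumB + W = t*(t+1)) (h4 : W + S = t*(ε + 2*n))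
    (hS : S = r + ((ε + 2*n)^2 - 2*(ε + 2*n) + ε)/4) :
    sumB = r + ((2*(t+1) - (ε + 2*n))^2 - 2*(2*(t+1) - (ε+2*n)) + ε)/4 := by
  interval_cases ε
  · set m := t + 1 - n with hm
    have hnm : n + m = t + 1 := by omega
    have key := keyId0 t n m hnm
    have hA : n ≤ n^2 := Nat.le_self_pow two_ne_zero n
    have hB : m ≤ m^2 := Nat.le_self_pow two_ne_zero m
    rw [show (0 + 2*n)^2 = 4*n^2 by ring] at hS
    rw [show 2*(t+1) - (0 + 2*n) = 2*m by omega, show (2*m)^2 = 4*m^2 by ring]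
    rw [show t*(0+2*n) = 2*(t*n) by ring] at h4
    omega
  · have hnt : n ≤ t := by omega
    set m := t - n with hm
    have hnm : n + m = t := by omega
    have key := keyId1 t n m hnm
    have hA : n ≤ n^2 := Nat.le_self_pow two_ne_zero n
    have hB : m ≤ m^2 := Nat.le_self_pow two_ne_zero m
    rw [show (1 + 2*n)^2 = 4*n^2 + 4*n + 1 by ring] at hS
    rw [show 2*(t+1) - (1 + 2*n) = 2*m + 1 by omega,
        show (2*m+1)^2 = 4*m^2 + 4*m + 1 by ring]
    rw [show t*(1+2*n) = 2*(t*n) + t by ring] at h4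
    omega

theorem stmt3 (r M t ε : ℕ) (hε : ε ≤ 1) (hr : 1 ≤ r) (hM : ∃ n, M = ε + 2 * n)
    (l : List ℕ) (hl : l ∈ SS r M ε) (ht : ∀ x ∈ l, x ≤ t) :
    complB t l ∈ SS r (2 * (t + 1) - M) ε := by
  obtain ⟨hlen, -, hcnt, hsum⟩ := hl
  -- basic computations
  have hlenB : (complB t l).length = ∑ a ∈ Finset.range (t+1), (2 - l.count a) := by
    simp only [complB, List.length_flatMap, Function.comp_def, List.length_replicate]
    rw [listsum_eq]
    have h := Finset.sum_range_reflect (fun a => 2 - l.count a) (t+1)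
    simp only [Nat.add_sub_cancel] at h
    exact h
  have hsumB : (complB t l).sum = ∑ a ∈ Finset.range (t+1), (2 - l.count a) * (t - a) := by
    simp only [complB]
    rw [sum_flatMap']
    simp only [List.sum_replicate, smul_eq_mul]
    rw [listsum_eq, ← Finset.sum_range_reflect (fun a => (2 - l.count a) * (t - a)) (t+1)]
    refine Finset.sum_congr rfl fun x hx => ?_
    have hx' : x < t+1 := Finset.mem_range.1 hx
    rw [show t + 1 - 1 - x = t - x by omega, Nat.sub_sub_self (by omega : x ≤ t)]
  have e1 : (∑ a ∈ Finset.range (t+1), (2 - l.count a)) + M = 2*(t+1) := by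
    rw [← hlen, ← count_range_sum t l ht, ← Finset.sum_add_distrib,
      Finset.sum_congr rfl (fun a _ => Nat.sub_add_cancel (hcnt a)),
      Finset.sum_const, Finset.card_range, smul_eq_mul]
    ring
  have e2 : (complB t l).sum + (∑ a ∈ Finset.range (t+1), l.count a * (t - a)) = t*(t+1) := by
    rw [hsumB, ← Finset.sum_add_distrib]
    have h : ∀ a ∈ Finset.range (t+1),
        (2 - l.count a) * (t - a) + l.count a * (t - a) = 2 * (t - a) := by
      intro a _
      rw [← add_mul, Nat.sub_add_cancel (hcnt a)]
    rw [Finset.sum_congr rfl h, ← Finset.mul_sum]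
    have h2 : ∑ a ∈ Finset.range (t+1), (t - a) = ∑ a ∈ Finset.range (t+1), a := by
      simpa using Finset.sum_range_reflect (fun a => a) (t+1)
    rw [h2, mul_comm 2, Finset.sum_range_id_mul_two, Nat.add_sub_cancel, Nat.mul_comm]
  have e4 : (∑ a ∈ Finset.range (t+1), l.count a * (t - a)) + l.sum = t * M := by
    have h : ∀ a ∈ Finset.range (t+1),
        l.count a * (t - a) + a * l.count a = t * l.count a := by
      intro a ha
      have hat : a ≤ t := by have := Finset.mem_range.1 ha; omega
      rw [mul_comm a (l.count a), ← mul_add, Nat.sub_add_cancel hat, mul_comm]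
    rw [← weight_range_sum t l ht, ← Finset.sum_add_distrib,
      Finset.sum_congr rfl h, ← Finset.mul_sum, count_range_sum t l ht, hlen]
  have hMle : M ≤ 2*(t+1) := by omega
  refine ⟨?_, sortedFlat (fun x => 2 - l.count (t - x)) (t+1), ?_, ?_⟩
  · omega
  · intro x
    have hcx : (complB t l).count x =
        ∑ y ∈ Finset.range (t+1), (if y = x then 2 - l.count (t - y) else 0) := by
      simp only [complB, List.count_flatMap, Function.comp_def, List.count_replicate,
        beq_iff_eq]
      rw [listsum_eq]
    rw [hcx, Finset.sum_ite_eq' (Finset.range (t+1)) x (fun y => 2 - l.count (t - y))]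
    split <;> omega
  · obtain ⟨n, rfl⟩ := hM
    exact finalArith r t ε n (complB t l).sum
      (∑ a ∈ Finset.range (t+1), l.count a * (t - a)) l.sum hε hr hMle e2 e4 hsum
end

section
/- For a_* ∈ 𝔖_r^M with maximal entry a_M and any t ≥ a_M, the complement a_*^{!t} again has the property that no value occurs more than twice, and applying complementation twice recovers a_*: (a_*^{!t})^{!t} = a_*. -/
lemma count_flat (g : ℕ → ℕ) (n y : ℕ) :
    ((List.range n).flatMap (fun x => List.replicate (g x) x)).count y
      = if y < n then g y else 0 := by
  induction n with
  | zero => simp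
  | succ n ih =>
    rw [List.range_succ, List.flatMap_append, List.count_append, ih]
    simp only [List.flatMap_singleton, List.count_replicate]
    rcases lt_trichotomy y n with h | h | h
    · simp [h, h.trans (Nat.lt_succ_self n), h.ne']
    · subst h; simp
    · simp [not_lt.mpr h.le, not_le.mpr h, h.ne]

lemma sorted_flat (g : ℕ → ℕ) (n : ℕ) :
    ((List.range n).flatMap (fun x => List.replicate (g x) x)).Pairwise (· ≤ ·) := by
  induction n with
  | zero => simp
  | succ n ih =>
    rw [List.range_succ, List.flatMap_append, List.flatMap_singleton]
    refine (List.pairwise_append).mpr ⟨ih, List.pairwise_replicate.mpr (by simp), ?_⟩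
    intro a ha b hb
    obtain ⟨x, hx, ha'⟩ := List.mem_flatMap.mp ha
    rw [List.eq_of_mem_replicate ha', List.eq_of_mem_replicate hb]
    exact le_of_lt (List.mem_range.mp hx)

lemma canon (t : ℕ) (l : List ℕ) (hs : l.Pairwise (· ≤ ·)) (ht : ∀ x ∈ l, x ≤ t) :
    (List.range (t + 1)).flatMap (fun x => List.replicate (l.count x) x) = l := by
  refine List.Perm.eq_of_pairwise' (sorted_flat _ _) hs (List.perm_iff_count.mpr fun y => ?_)
  rw [count_flat]
  split
  · rfl
  · next h => exact (List.count_eq_zero.mpr fun hy => h (Nat.lt_succ_of_le (ht y hy))).symm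

theorem stmt4 (r M t ε : ℕ) (hε : ε ≤ 1) (hr : 1 ≤ r) (hM : ∃ n, M = ε + 2 * n)
    (l : List ℕ) (hl : l ∈ SS r M ε) (ht : ∀ x ∈ l, x ≤ t) :
    (∀ x, (complB t l).count x ≤ 2) ∧ complB t (complB t l) = l := by
  obtain ⟨hlen, hsort, hcount, hsum⟩ := hl
  have hc : ∀ y, (complB t l).count y = if y < t + 1 then 2 - l.count (t - y) else 0 :=
    fun y => count_flat (fun x => 2 - l.count (t - x)) (t + 1) y
  constructor
  · intro x; rw [hc]; split <;> omega
  · conv_lhs => rw [complB]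
    refine Eq.trans (List.flatMap_congr fun x hx => ?_) (canon t l hsort ht)
    have hx' : x < t + 1 := List.mem_range.mp hx
    rw [hc (t - x)]
    have h1 : t - (t - x) = x := by omega
    have h2 : t - x < t + 1 := by omega
    rw [if_pos h2, h1]
    have := hcount x
    congr 1
    omega
end

section
/- Let p ≥ 4, and suppose (a_*, a'_*) ∈ 𝔗_r^m × 𝔗_r^m is a pair such that for some k and some a: (a_k, a_{k+1}) = (a, a+p), (a'_k, a'_{k+1}) = (a+1, a+p-1), and a_s = a'_s for all s ≠ k, k+1. Then for t ≥ max(a_m, a'_m), the pair of complements (a'_*^{!t}, a_*^{!t}) satisfies: for some index k' and some value b, the entries of a'_*^{!t} from position k' to k'+p-2 are (b, b+2, b+3, ..., b+p-3, b+p-2, b+p), the corresponding entries of a_*^{!t} are (b+1, b+2, ..., b+p-2, b+p-1), and the two complement sequences agree in all other positions. -/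
theorem stmt5 (r m t p : ℕ) (hp : 4 ≤ p) (l l' : List ℕ)
    (hl : l ∈ TT r m) (hl' : l' ∈ TT r m) (hP : PairP p l l')
    (ht : ∀ x ∈ l, x ≤ t) (ht' : ∀ x ∈ l', x ≤ t) :
    ∃ b u v, complA t l' = u ++ listA p b ++ v ∧
      complA t l = u ++ listA' p b ++ v := by
  clear hl' ht'
  obtain ⟨a, u, v, hl1, hl'1⟩ := hP
  obtain ⟨-, hsort, -⟩ := hl
  have hap : a + p ≤ t := ht (a + p) (by rw [hl1]; simp)
  rw [hl1, List.append_assoc] at hsort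
  have hu : ∀ x ∈ u, x < a := fun x hx =>
    (List.pairwise_append.1 hsort).2.2 x hx a (by simp)
  have hv : ∀ y ∈ v, a + p < y := fun y hy =>
    (List.pairwise_append.1 (List.pairwise_append.1 hsort).2.1).2.2 (a+p) (by simp) y hy
  have hmeml : ∀ e, e ∈ l ↔ (e ∈ u ∨ e = a ∨ e = a + p ∨ e ∈ v) := by
    intro e; rw [hl1]; simp
  have hmeml' : ∀ e, e ∈ l' ↔ (e ∈ u ∨ e = a + 1 ∨ e = a + p - 1 ∨ e ∈ v) := by
    intro e; rw [hl'1]; simp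
  set b := t - (a + p) with hbdef
  set P : ℕ → Bool := fun x => decide ((t - x) ∉ l) with hP
  set P' : ℕ → Bool := fun x => decide ((t - x) ∉ l') with hP'
  have hsplit : ∀ s m n : ℕ, List.range' s (m + n) = List.range' s m ++ List.range' (s + m) n := by
    intro s m n
    rw [← List.range'_append (s := s) (m := m) (n := n) (step := 1), Nat.one_mul]
  -- pointwise values of P on the window [b, b+p]
  have Plmid : ∀ x, b + 1 ≤ x → x < b + p → P x = true := by
    intro x h1 h2
    simp only [hP, decide_eq_true_eq]
    rw [hmeml]
    rintro (h | h | h | h)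
    · exact absurd (hu _ h) (by omega)
    · omega
    · omega
    · exact absurd (hv _ h) (by omega)
  have Plb : P b = false := by
    simp only [hP, decide_eq_false_iff_not, not_not]
    rw [hmeml]; right; right; left; omega
  have Plbp : P (b + p) = false := by
    simp only [hP, decide_eq_false_iff_not, not_not]
    rw [hmeml]; right; left; omega
  -- pointwise values of P' on the window
  have P'mid : ∀ x, b + 2 ≤ x → x < b + p - 1 → P' x = true := by
    intro x h1 h2
    simp only [hP', decide_eq_true_eq]
    rw [hmeml']
    rintro (h | h | h | h)
    · exact absurd (hu _ h) (by omega)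
    · omega
    · omega
    · exact absurd (hv _ h) (by omega)
  have P'b : P' b = true := by
    simp only [hP', decide_eq_true_eq]
    rw [hmeml']
    rintro (h | h | h | h)
    · exact absurd (hu _ h) (by omega)
    · omega
    · omega
    · exact absurd (hv _ h) (by omega)
  have P'b1 : P' (b + 1) = false := by
    simp only [hP', decide_eq_false_iff_not, not_not]
    rw [hmeml']; right; right; left; omega
  have P'bp1 : P' (b + p - 1) = false := by
    simp only [hP', decide_eq_false_iff_not, not_not]
    rw [hmeml']; right; left; omega
  have P'bp : P' (b + p) = true := by
    simp only [hP', decide_eq_true_eq]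
    rw [hmeml']
    rintro (h | h | h | h)
    · exact absurd (hu _ h) (by omega)
    · omega
    · omega
    · exact absurd (hv _ h) (by omega)
  -- agreement outside the window
  have hagree : ∀ x, x < b ∨ (b + p < x ∧ x ≤ t) → P x = P' x := by
    intro x hx
    have : (t - x ∈ l) ↔ (t - x ∈ l') := by
      rw [hmeml, hmeml']
      constructor
      · rintro (h | h | h | h)
        · tauto
        · omega
        · omega
        · tauto
      · rintro (h | h | h | h)
        · tauto
        · omega
        · omega
        · tauto
    simp only [hP, hP', this]
  -- split the big range
  have hrng : List.range (t + 1) =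
      List.range' 0 b ++ List.range' b (p + 1) ++ List.range' (b + (p + 1)) a := by
    have e1 : t + 1 = b + ((p + 1) + a) := by omega
    rw [List.range_eq_range', e1, hsplit, hsplit]
    simp [List.append_assoc]
  refine ⟨b, (List.range' 0 b).filter P', (List.range' (b + (p + 1)) a).filter P', ?_, ?_⟩
  · -- complA t l'
    rw [complA, hrng, List.filter_append, List.filter_append]
    congr 1
    · congr 1
      -- middle for l'
      have e2 : p + 1 = 2 + ((p - 3) + 2) := by omega
      rw [e2, hsplit, hsplit, List.filter_append, List.filter_append]
      have s1 : List.filter P' (List.range' b 2) = [b] := by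
        show List.filter P' [b, b + 1] = [b]
        simp [P'b, P'b1]
      have s2 : List.filter P' (List.range' (b + 2) (p - 3)) = List.range' (b + 2) (p - 3) := by
        rw [List.filter_eq_self]
        intro x hx
        rw [List.mem_range'_1] at hx
        exact P'mid x hx.1 (by omega)
      have s3 : List.filter P' (List.range' (b + 2 + (p - 3)) 2) = [b + p] := by
        have e3 : b + 2 + (p - 3) = b + p - 1 := by omega
        have e4 : b + p - 1 + 1 = b + p := by omega
        rw [e3]
        show List.filter P' [b + p - 1, b + p - 1 + 1] = [b + p]
        rw [e4]
        simp [P'bp1, P'bp]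
      rw [s1, s2, s3, listA, List.range'_eq_map_range]
      simp
  · -- complA t l
    rw [complA, hrng, List.filter_append, List.filter_append]
    congr 1
    · congr 1
      · exact List.filter_congr fun x hx => hagree x (Or.inl (by
          rw [List.mem_range'_1] at hx; omega))
      -- middle for l
      have e2 : p + 1 = 1 + ((p - 1) + 1) := by omega
      rw [e2, hsplit, hsplit, List.filter_append, List.filter_append]
      have s1 : List.filter P (List.range' b 1) = [] := by
        show List.filter P [b] = []
        simp [Plb]
      have s2 : List.filter P (List.range' (b + 1) (p - 1)) = List.range' (b + 1) (p - 1) := by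
        rw [List.filter_eq_self]
        intro x hx
        rw [List.mem_range'_1] at hx
        exact Plmid x hx.1 (by omega)
      have s3 : List.filter P (List.range' (b + 1 + (p - 1)) 1) = [] := by
        have e3 : b + 1 + (p - 1) = b + p := by omega
        rw [e3]
        show List.filter P [b + p] = []
        simp [Plbp]
      rw [s1, s2, s3, listA', List.range'_eq_map_range]
      simp
    · exact List.filter_congr fun x hx => hagree x (Or.inr (by
        rw [List.mem_range'_1] at hx; omega))
end

section
/- Suppose (a_*, a'_*) ∈ 𝔗_r^m × 𝔗_r^m with (a_k, a_{k+1}) = (a, a+3), (a'_k, a'_{k+1}) = (a+1, a+2), and a_s = a'_s for s ≠ k, k+1 (the case p = 3). Then for t ≥ max(a_m, a'_m), the pair (a'_*^{!t}, a_*^{!t}) is again of the same form: there exist an index k' and a value b with the entries of a'_*^{!t} at positions k', k'+1 equal to (b, b+3), the entries of a_*^{!t} at those positions equal to (b+1, b+2), and all other entries agreeing. -/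
theorem stmt6 (r m t : ℕ) (l l' : List ℕ)
    (hl : l ∈ TT r m) (hl' : l' ∈ TT r m) (hP : PairP 3 l l')
    (ht : ∀ x ∈ l, x ≤ t) (ht' : ∀ x ∈ l', x ≤ t) :
    PairP 3 (complA t l') (complA t l) := by
  obtain ⟨a, u, v, hll, hll'⟩ := hP
  rw [show a + 3 - 1 = a + 2 from rfl] at hll'
  have hsort := hl.2.1
  rw [hll, List.append_assoc] at hsort
  rw [List.pairwise_append] at hsort
  have hu : ∀ x ∈ u, x < a := fun x hx => hsort.2.2 x hx a (by simp)
  have hv : ∀ x ∈ v, a + 3 < x := by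
    have := hsort.2.1
    rw [show ([a, a+3] ++ v) = a :: (a+3) :: v from rfl] at this
    intro x hx
    exact (List.pairwise_cons.mp (List.pairwise_cons.mp this).2).1 x hx
  have hat : a + 3 ≤ t := ht (a + 3) (by simp [hll])
  -- membership facts
  have hmeml : ∀ y, y ∈ l ↔ (y ∈ u ∨ y = a ∨ y = a + 3 ∨ y ∈ v) := by
    intro y; rw [hll]; simp [List.mem_append, or_assoc]
  have hmeml' : ∀ y, y ∈ l' ↔ (y ∈ u ∨ y = a + 1 ∨ y = a + 2 ∨ y ∈ v) := by
    intro y; rw [hll']; simp [List.mem_append, or_assoc]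
  have hiff : ∀ y, y < a ∨ a + 3 < y → (y ∈ l ↔ y ∈ l') := by
    intro y hy; rw [hmeml, hmeml']; constructor
    · rintro (h | h | h | h) <;> first | (left; exact h) | omega | (right; right; right; exact h)
    · rintro (h | h | h | h) <;> first | (left; exact h) | omega | (right; right; right; exact h)
  have ha : a ∈ l := by rw [hmeml]; tauto
  have ha3 : a + 3 ∈ l := by rw [hmeml]; tauto
  have ha1' : a + 1 ∈ l' := by rw [hmeml']; tauto
  have ha2' : a + 2 ∈ l' := by rw [hmeml']; tauto
  have hna1 : a + 1 ∉ l := by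
    rw [hmeml]; rintro (h | h | h | h)
    · exact absurd (hu _ h) (by omega)
    · omega
    · omega
    · exact absurd (hv _ h) (by omega)
  have hna2 : a + 2 ∉ l := by
    rw [hmeml]; rintro (h | h | h | h)
    · exact absurd (hu _ h) (by omega)
    · omega
    · omega
    · exact absurd (hv _ h) (by omega)
  have hna' : a ∉ l' := by
    rw [hmeml']; rintro (h | h | h | h)
    · exact absurd (hu _ h) (by omega)
    · omega
    · omega
    · exact absurd (hv _ h) (by omega)
  have hna3' : a + 3 ∉ l' := by
    rw [hmeml']; rintro (h | h | h | h)
    · exact absurd (hu _ h) (by omega)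
    · omega
    · omega
    · exact absurd (hv _ h) (by omega)
  set b := t - (a + 3) with hb
  have hsplit : t + 1 = b + 4 + a := by omega
  have hrange : List.range (t + 1) =
      (List.range b ++ [b, b + 1, b + 2, b + 3]) ++
        (List.range a).map (fun x => b + 4 + x) := by
    rw [hsplit, List.range_add, List.range_add,
      show List.range 4 = [0, 1, 2, 3] from rfl]
    simp
  -- compute the two filters
  have key : ∀ (L : List ℕ), complA t L =
      (List.range b).filter (fun x => decide ((t - x) ∉ L)) ++
      [b, b+1, b+2, b+3].filter (fun x => decide ((t - x) ∉ L)) ++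
      ((List.range a).map (fun x => b + 4 + x)).filter
        (fun x => decide ((t - x) ∉ L)) := by
    intro L
    rw [complA, hrange, List.filter_append, List.filter_append]
  have houter : ∀ x ∈ List.range b,
      (decide ((t - x) ∉ l') : Bool) = decide ((t - x) ∉ l) := by
    intro x hx
    rw [List.mem_range] at hx
    simp only [decide_eq_decide]
    rw [hiff (t - x) (by omega)]
  have houter2 : ∀ x ∈ (List.range a).map (fun x => b + 4 + x),
      (decide ((t - x) ∉ l') : Bool) = decide ((t - x) ∉ l) := by
    intro x hx
    simp only [List.mem_map, List.mem_range] at hx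
    obtain ⟨i, hi, rfl⟩ := hx
    simp only [decide_eq_decide]
    rw [hiff (t - (b + 4 + i)) (by omega)]
  have hb0 : t - b = a + 3 := by omega
  have hb1 : t - (b + 1) = a + 2 := by omega
  have hb2 : t - (b + 2) = a + 1 := by omega
  have hb3 : t - (b + 3) = a := by omega
  have hmid' : [b, b+1, b+2, b+3].filter (fun x => decide ((t - x) ∉ l')) = [b, b + 3] := by
    simp [List.filter, hb0, hb1, hb2, hb3, hna', hna3', ha1', ha2']
  have hmid : [b, b+1, b+2, b+3].filter (fun x => decide ((t - x) ∉ l)) = [b + 1, b + 2] := by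
    simp [List.filter, hb0, hb1, hb2, hb3, ha, ha3, hna1, hna2]
  refine ⟨b, (List.range b).filter (fun x => decide ((t - x) ∉ l)),
    ((List.range a).map (fun x => b + 4 + x)).filter (fun x => decide ((t - x) ∉ l)), ?_, ?_⟩
  · rw [key l', List.filter_congr houter, List.filter_congr houter2, hmid']
  · rw [key l, hmid, show b + 3 - 1 = b + 2 from rfl]
end

section
/- Let (a_*, a'_*) ∈ 𝔗_r^m × 𝔗_r^m with (a_k, a_{k+1}) = (a, a+3), (a'_k, a'_{k+1}) = (a+1, a+2), and a_s = a'_s for s ≠ k, k+1. Define the pair to be 'induced' if there exists k₀ ∈ {1,...,r} such that subtracting 1 from the last k₀ entries of both a_* and a'_* yields elements of 𝔗_{r-k₀}^m (in particular the resulting sequences are still strictly increasing sequences of natural numbers). Then at least one of the following holds: (i) (a_*, a'_*) is induced; (ii) for t sufficiently large, (a'_*^{!t}, a_*^{!t}) is induced; (iii) (a_*, a'_*) is equivalent to ((0,3),(1,2)) under the relation generated by prepending 0 and incrementing all entries by 1 simultaneously in both sequences. -/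
private lemma getGe : ∀ (l : List ℕ), l.Pairwise (· < ·) → ∀ s, (∀ e ∈ l, s ≤ e) →
    ∀ i, (hi : i < l.length) → s + i ≤ l[i]
  | [], _, s, _, i, hi => by simp at hi
  | b :: t, hs, s, hb, 0, hi => by simpa using hb b (List.mem_cons_self)
  | b :: t, hs, s, hb, (i+1), hi => by
    obtain ⟨hbt, hts⟩ := List.pairwise_cons.mp hs
    have h1 : ∀ e ∈ t, s + 1 ≤ e := fun e he =>
      Nat.succ_le_of_lt (lt_of_le_of_lt (hb b (List.mem_cons_self)) (hbt e he))
    have := getGe t hts (s+1) h1 i (by simpa using Nat.lt_of_succ_lt_succ hi)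
    simpa [Nat.add_comm, Nat.add_assoc, Nat.add_left_comm] using this

private lemma twoSumGe : ∀ (l : List ℕ), l.Pairwise (· < ·) → ∀ s, (∀ e ∈ l, s ≤ e) →
    l.length * (2*s + l.length) ≤ 2 * l.sum + l.length
  | [], _, s, _ => by simp
  | b :: t, hs, s, hb => by
    obtain ⟨hbt, hts⟩ := List.pairwise_cons.mp hs
    have h1 : ∀ e ∈ t, s + 1 ≤ e := fun e he =>
      Nat.succ_le_of_lt (lt_of_le_of_lt (hb b (List.mem_cons_self)) (hbt e he))
    have ih := twoSumGe t hts (s+1) h1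
    have hbs : s ≤ b := hb b (List.mem_cons_self)
    simp only [List.length_cons, List.sum_cons]
    nlinarith [ih, hbs]

private lemma sumGeLen : ∀ (l : List ℕ), (∀ e ∈ l, 1 ≤ e) → l.length ≤ l.sum
  | [], _ => by simp
  | b :: t, hb => by
    have := sumGeLen t (fun e he => hb e (List.mem_cons_of_mem b he))
    have := hb b (List.mem_cons_self)
    simp only [List.length_cons, List.sum_cons]; omega

private lemma sumMapPred : ∀ (l : List ℕ), (∀ e ∈ l, 1 ≤ e) →
    (l.map (· - 1)).sum = l.sum - l.length
  | [], _ => by simp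
  | b :: t, hb => by
    have h1 := sumMapPred t (fun e he => hb e (List.mem_cons_of_mem b he))
    have h2 := hb b (List.mem_cons_self)
    have h3 := sumGeLen t (fun e he => hb e (List.mem_cons_of_mem b he))
    simp only [List.map_cons, List.sum_cons, List.length_cons, h1]; omega

private lemma twoMulPredDiv (n : ℕ) : 2 * (n * (n-1) / 2) = n * (n - 1) := by
  cases n with
  | zero => simp
  | succ k =>
    have : (k+1) * (k+1-1) = k * (k+1) := by rw [Nat.add_sub_cancel]; ring
    rw [this]
    have : 2 ∣ k * (k+1) := (Nat.even_mul_succ_self k).two_dvd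
    omega

private lemma rangeSum2 (n : ℕ) : 2 * (List.range n).sum = n * (n-1) := by
  induction n with
  | zero => simp
  | succ k ih =>
    rw [List.range_succ, List.sum_append]
    simp only [List.sum_cons, List.sum_nil]
    cases k with
    | zero => simp
    | succ j =>
      have : (j+1+1) * (j+1+1-1) = (j+2)*(j+1) := by rw [Nat.add_sub_cancel]
      rw [this]
      have h2 : (j+1) * (j+1-1) = (j+1)*j := by rw [Nat.add_sub_cancel]
      rw [h2] at ih
      nlinarith [ih]

private lemma range'Sum2 : ∀ (n s : ℕ), 2 * (List.range' s n).sum = 2*n*s + n*(n-1)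
  | 0, s => by simp
  | (n+1), s => by
    rw [List.range'_succ, List.sum_cons]
    have ih := range'Sum2 n (s+1)
    have h1 : (n+1) * (n+1-1) = n*(n+1) := by rw [Nat.add_sub_cancel]; ring
    rw [h1]
    cases n with
    | zero => simp
    | succ j =>
      have h2 : (j+1) * (j+1-1) = (j+1)*j := by rw [Nat.add_sub_cancel]
      rw [h2] at ih
      nlinarith [ih]

private lemma sortedEqOfMem : ∀ (l₁ l₂ : List ℕ), l₁.Pairwise (· < ·) → l₂.Pairwise (· < ·) →
    (∀ x, x ∈ l₁ ↔ x ∈ l₂) → l₁ = l₂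
  | [], [], _, _, _ => rfl
  | [], b :: t, _, _, h => by have := (h b).mpr (List.mem_cons_self); simp at this
  | a :: t, [], _, _, h => by have := (h a).mp (List.mem_cons_self); simp at this
  | a :: t₁, b :: t₂, h₁, h₂, h => by
    obtain ⟨hat, ht₁⟩ := List.pairwise_cons.mp h₁
    obtain ⟨hbt, ht₂⟩ := List.pairwise_cons.mp h₂
    have hab : a = b := by
      have h1 := (h a).mp (List.mem_cons_self)
      have h2 := (h b).mpr (List.mem_cons_self)
      rcases List.mem_cons.mp h1 with h1 | h1
      · exact h1
      · rcases List.mem_cons.mp h2 with h2 | h2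
        · exact h2.symm
        · exact absurd (lt_trans (hbt a h1) (hat b h2)) (lt_irrefl b)
    subst hab
    have : t₁ = t₂ := sortedEqOfMem t₁ t₂ ht₁ ht₂ (fun x => by
      constructor
      · intro hx
        rcases List.mem_cons.mp ((h x).mp (List.mem_cons_of_mem a hx)) with h' | h'
        · exact absurd (hat x hx) (by omega)
        · exact h'
      · intro hx
        rcases List.mem_cons.mp ((h x).mpr (List.mem_cons_of_mem a hx)) with h' | h'
        · exact absurd (hbt x hx) (by omega)
        · exact h')
    rw [this]

private lemma mulPred (n : ℕ) : n * (n-1) = n*n - n := by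
  cases n with
  | zero => simp
  | succ k =>
    rw [Nat.add_sub_cancel]
    have : (k+1)*(k+1) = (k+1)*k + (k+1) := by ring
    omega

private lemma leSq (n : ℕ) : n ≤ n*n := by
  cases n with
  | zero => simp
  | succ k => exact Nat.le_mul_of_pos_left _ (Nat.succ_pos k)
private lemma splitInduced {r m h : ℕ} {l x t : List ℕ}
    (hl : l ∈ TT r m) (hsp : l = x ++ h :: t) (h1 : 1 ≤ h)
    (hx : ∀ b ∈ x, b + 2 ≤ h) :
    t.length + 1 ≤ r ∧ decLast (t.length + 1) l ∈ TT (r - (t.length + 1)) m := by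
  obtain ⟨hlen, hsort, hsum⟩ := hl
  subst hsp
  obtain ⟨px, pz, cross⟩ : x.Pairwise (·<·) ∧ (h :: t).Pairwise (·<·) ∧
      ∀ a ∈ x, ∀ b ∈ h :: t, a < b := List.pairwise_append.mp hsort
  have hmk : m = x.length + (t.length + 1) := by simpa using hlen.symm
  have hzge : ∀ e ∈ h :: t, h ≤ e := by
    intro e he
    rcases List.mem_cons.mp he with h' | h'
    · omega
    · exact le_of_lt ((List.pairwise_cons.mp pz).1 e h')
  have hzge1 : ∀ e ∈ h :: t, 1 ≤ e := fun e he => le_trans h1 (hzge e he)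
  have hhM : x.length + 1 ≤ h := by
    rcases Nat.eq_zero_or_pos x.length with hM0 | hM0
    · omega
    · have hmem : x[x.length-1] ∈ x := List.getElem_mem _
      have := getGe x px 0 (fun e _ => Nat.zero_le e) (x.length-1) (by omega)
      have := hx _ hmem
      omega
  have hsum2 : x.sum + (h :: t).sum = r + m * (m-1) / 2 := by simpa using hsum
  have hE : 2 * x.sum + 2 * (h :: t).sum = 2 * r + m * (m-1) := by
    have := twoMulPredDiv m
    omega
  have hA : x.length * x.length ≤ 2 * x.sum + x.length := by
    simpa using twoSumGe x px 0 (fun e _ => Nat.zero_le e)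
  have hB : (t.length + 1) * (2 * (x.length + 1) + (t.length + 1))
      ≤ 2 * (h :: t).sum + (t.length + 1) := by
    simpa using twoSumGe (h :: t) pz (x.length + 1) (fun e he => le_trans hhM (hzge e he))
  have hkr : t.length + 1 ≤ r := by
    have hm1 : m * (m - 1) + (x.length + (t.length+1)) =
        x.length*x.length + 2*x.length*(t.length+1) + (t.length+1)*(t.length+1) := by
      have h2 : m * (m-1) = m * m - m := by
        cases m with
        | zero => simp
        | succ n => rw [Nat.add_sub_cancel]; ring_nf; omega
      have h3 : m ≤ m * m := Nat.le_mul_of_pos_left m (by omega)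
      rw [h2, hmk]; ring_nf; omega
    have hB' : (t.length + 1) * (2 * (x.length + 1) + (t.length + 1)) =
        2*x.length*(t.length+1) + 2*(t.length+1) + (t.length+1)*(t.length+1) := by ring
    rw [hB'] at hB
    omega
  have htk : (x ++ h :: t).length - (t.length + 1) = x.length := by simp
  have hdec : decLast (t.length + 1) (x ++ h :: t) = x ++ (h :: t).map (· - 1) := by
    rw [decLast, htk, List.take_left, List.drop_left]
  refine ⟨hkr, ?_, ?_, ?_⟩
  · rw [hdec]; simp; omega
  · rw [hdec, List.pairwise_append]
    refine ⟨px, ?_, ?_⟩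
    · rw [List.pairwise_map]
      refine pz.imp_of_mem ?_
      intro p q hp hq hpq
      have := hzge1 p hp
      omega
    · intro p hp q hq
      obtain ⟨e, he, rfl⟩ := List.mem_map.mp hq
      have := hzge e he
      have := hx p hp
      omega
  · rw [hdec, List.sum_append, sumMapPred _ hzge1]
    have := sumGeLen _ hzge1
    simp only [List.length_cons] at *
    omega

private lemma staircaseOrSplit : ∀ (w : List ℕ), w.Pairwise (· < ·) → ∀ s, (∀ b ∈ w, s ≤ b) →
    w = List.range' s w.length ∨
    ∃ x h t, w = x ++ h :: t ∧ x = List.range' s x.length ∧ s + x.length + 1 ≤ h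
  | [], _, s, _ => by simp
  | b :: w, hs, s, hb => by
    obtain ⟨hbw, hws⟩ := List.pairwise_cons.mp hs
    have hsb : s ≤ b := hb b (List.mem_cons_self)
    rcases Nat.lt_or_ge s b with hlt | hge
    · exact Or.inr ⟨[], b, w, by simp, by simp, by simpa using hlt⟩
    · have hbs : b = s := by omega
      subst hbs
      have hwge : ∀ e ∈ w, b + 1 ≤ e := fun e he => hbw e he
      rcases staircaseOrSplit w hws (b+1) hwge with h' | ⟨x, h, t, h1', h2', h3'⟩
      · left
        rw [List.length_cons, List.range'_succ]
        exact congrArg (b :: ·) h'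
      · right
        refine ⟨b :: x, h, t, by simp [h1'], ?_, by simp; omega⟩
        rw [List.length_cons, List.range'_succ]
        exact congrArg (b :: ·) h2'
private lemma shA_iter (c p q : ℕ) : shA^[c] [p, q] = List.range c ++ [c + p, c + q] := by
  induction c with
  | zero => simp
  | succ n ih =>
    rw [Function.iterate_succ_apply', ih]
    simp [shA, List.range_succ_eq_map, Nat.succ_eq_add_one]
    omega

private lemma mem_complA {t x : ℕ} {l : List ℕ} :
    x ∈ complA t l ↔ x < t + 1 ∧ (t - x) ∉ l := by
  simp [complA]

private lemma sorted_complA (t : ℕ) (l : List ℕ) : (complA t l).Pairwise (· < ·) :=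
  (List.pairwise_lt_range (n := t+1)).filter _

theorem stmt7 (r m : ℕ) (l l' : List ℕ)
    (hl : l ∈ TT r m) (hl' : l' ∈ TT r m) (hP : PairP 3 l l') :
    InducedT r l l' ∨
    (∃ T, ∀ t, T ≤ t → InducedT r (complA t l') (complA t l)) ∨
    PairEquivA (l, l') ([0, 3], [1, 2]) := by
  obtain ⟨a, u, v, hleq, hl'eq⟩ := hP
  have h32 : a + 3 - 1 = a + 2 := rfl
  rw [h32] at hl'eq
  subst hleq; subst hl'eq
  -- decompose sortedness
  obtain ⟨h₁, hv, hcross⟩ : (u ++ [a, a+3]).Pairwise (·<·) ∧ v.Pairwise (·<·) ∧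
      ∀ b ∈ u ++ [a, a+3], ∀ e ∈ v, b < e := List.pairwise_append.mp hl.2.1
  obtain ⟨hu, hp2, hua⟩ : u.Pairwise (·<·) ∧ ([a, a+3] : List ℕ).Pairwise (·<·) ∧
      ∀ b ∈ u, ∀ e ∈ [a, a+3], b < e := List.pairwise_append.mp h₁
  rcases staircaseOrSplit u hu 0 (fun b _ => Nat.zero_le b) with
    hustair | ⟨x, h, t₀, hxu, hxr, hgap⟩
  swap
  · -- a gap inside u: common split
    left
    have hxmem : ∀ b ∈ x, b + 2 ≤ h := by
      intro b hb
      rw [hxr] at hb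
      have := List.mem_range'_1.mp hb
      omega
    have hsp1 : (u ++ [a, a+3]) ++ v = x ++ h :: (t₀ ++ [a, a+3] ++ v) := by
      rw [hxu]; simp
    have hsp2 : (u ++ [a+1, a+2]) ++ v = x ++ h :: (t₀ ++ [a+1, a+2] ++ v) := by
      rw [hxu]; simp
    obtain ⟨hk1, hm1⟩ := splitInduced hl hsp1 (by omega) hxmem
    obtain ⟨hk2, hm2⟩ := splitInduced hl' hsp2 (by omega) hxmem
    have hkeq : (t₀ ++ [a+1, a+2] ++ v).length = (t₀ ++ [a, a+3] ++ v).length := by simp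
    rw [hkeq] at hm2 hk2
    exact ⟨(t₀ ++ [a, a+3] ++ v).length + 1, by omega, hk1,
      by rw [hl.1]; exact hm1, by rw [hl'.1]; exact hm2⟩
  set c := u.length with hc
  have huR : u = List.range c := by rw [hustair, ← List.range_eq_range']
  rcases Nat.lt_or_ge c a with hca | hca
  · -- gap at the junction
    left
    have hum : ∀ b ∈ u, b + 2 ≤ a := by
      intro b hb
      rw [huR] at hb
      have := List.mem_range.mp hb
      omega
    have hum' : ∀ b ∈ u, b + 2 ≤ a + 1 := fun b hb => le_trans (hum b hb) (by omega)
    have hsp1 : (u ++ [a, a+3]) ++ v = u ++ a :: ((a+3) :: v) := by simp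
    have hsp2 : (u ++ [a+1, a+2]) ++ v = u ++ (a+1) :: ((a+2) :: v) := by simp
    obtain ⟨hk1, hm1⟩ := splitInduced hl hsp1 (by omega) hum
    obtain ⟨hk2, hm2⟩ := splitInduced hl' hsp2 (by omega) hum'
    have hkeq : ((a+2) :: v).length = ((a+3) :: v).length := by simp
    rw [hkeq] at hm2 hk2
    exact ⟨((a+3) :: v).length + 1, by omega, hk1,
      by rw [hl.1]; exact hm1, by rw [hl'.1]; exact hm2⟩
  · -- a = c
    have hac : a = c := by
      rcases Nat.eq_zero_or_pos c with h0 | h0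
      · omega
      · have hmem : c - 1 ∈ u := by
          rw [huR]; exact List.mem_range.mpr (by omega)
        have := hua _ hmem a (by simp)
        omega
    subst hac
    have hvge : ∀ e ∈ v, c + 4 ≤ e := by
      intro e he
      have := hcross (c+3) (by simp) e he
      omega
    rcases staircaseOrSplit v hv (c+4) hvge with
      hvstair | ⟨x₂, h, t₂, hvx, hx₂r, hgap₂⟩
    swap
    · -- gap inside v: common split
      left
      have hmem1 : ∀ b ∈ (u ++ [c, c+3]) ++ x₂, b + 2 ≤ h := by
        intro b hb
        simp only [List.mem_append, List.mem_cons, List.not_mem_nil, or_false] at hb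
        rcases hb with (hb | hb) | hb
        · rw [huR] at hb; have := List.mem_range.mp hb; omega
        · rcases hb with rfl | rfl <;> omega
        · rw [hx₂r] at hb; have := List.mem_range'_1.mp hb; omega
      have hmem2 : ∀ b ∈ (u ++ [c+1, c+2]) ++ x₂, b + 2 ≤ h := by
        intro b hb
        simp only [List.mem_append, List.mem_cons, List.not_mem_nil, or_false] at hb
        rcases hb with (hb | hb) | hb
        · rw [huR] at hb; have := List.mem_range.mp hb; omega
        · rcases hb with rfl | rfl <;> omega
        · rw [hx₂r] at hb; have := List.mem_range'_1.mp hb; omega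
      have hsp1 : (u ++ [c, c+3]) ++ v = ((u ++ [c, c+3]) ++ x₂) ++ h :: t₂ := by
        rw [hvx]; simp
      have hsp2 : (u ++ [c+1, c+2]) ++ v = ((u ++ [c+1, c+2]) ++ x₂) ++ h :: t₂ := by
        rw [hvx]; simp
      obtain ⟨hk1, hm1⟩ := splitInduced hl hsp1 (by omega) hmem1
      obtain ⟨hk2, hm2⟩ := splitInduced hl' hsp2 (by omega) hmem2
      exact ⟨t₂.length + 1, by omega, hk1,
        by rw [hl.1]; exact hm1, by rw [hl'.1]; exact hm2⟩
    cases v with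
    | nil =>
      -- minimal pair: case (iii)
      right; right
      refine ⟨0, c, ?_, ?_⟩
      · show ((u ++ [c, c+3]) ++ []) = shA^[c] [0, 3]
        rw [shA_iter, huR]; simp
      · show ((u ++ [c+1, c+2]) ++ []) = shA^[c] [1, 2]
        rw [shA_iter, huR]; simp
    | cons v0 vt =>
      -- case (ii): complement pair is induced
      right; left
      set v : List ℕ := v0 :: vt with hvdef
      set K := v.length with hKdef
      have hK : 1 ≤ K := by simp [hvdef, hKdef]
      have hm : m = c + 2 + K := by
        have h := hl.1
        simp only [List.length_append, List.length_cons, List.length_nil] at h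
        omega
      -- compute r
      have hr : r = 2 * K + 2 := by
        have h1 : 2 * u.sum = c * (c-1) := by rw [huR]; exact rangeSum2 c
        have h2 : 2 * v.sum = 2 * K * (c+4) + K * (K-1) := by
          rw [hvstair]; exact range'Sum2 K (c+4)
        have h4 : u.sum + (c + (c + 3)) + v.sum = r + m * (m-1) / 2 := by
          have h := hl.2.2
          simp only [List.sum_append, List.sum_cons, List.sum_nil] at h
          omega
        have h5 := twoMulPredDiv m
        have e1 : c * (c-1) = c*c - c := mulPred c
        have e2 : K * (K-1) = K*K - K := mulPred K
        have e3 : m * (m-1) = m*m - m := mulPred m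
        have e4 : m * m = c*c + K*K + 2*(c*K) + 4*c + 4*K + 4 := by
          rw [hm]; ring
        have e5 : 2 * K * (c + 4) = 2*(c*K) + 8*K := by ring
        have b1 : c ≤ c*c := leSq c
        have b2 : K ≤ K*K := leSq K
        have b3 : m ≤ m*m := leSq m
        omega
      -- now the complement computation
      refine ⟨m + 2, fun t ht => ?_⟩
      set N := t - m - 1 with hN
      set L1 : List ℕ := List.range N ++ [t-c-3, t-c] with hL1
      set L2 : List ℕ := List.range N ++ [t-c-2, t-c-1] with hL2
      have hsortedL1 : L1.Pairwise (· < ·) := by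
        rw [hL1, List.pairwise_append]
        refine ⟨List.pairwise_lt_range (n := N), ?_, ?_⟩
        · simp; omega
        · intro b hb e he
          have := List.mem_range.mp hb
          simp only [List.mem_cons, List.not_mem_nil, or_false] at he
          rcases he with rfl | rfl <;> omega
      have hsortedL2 : L2.Pairwise (· < ·) := by
        rw [hL2, List.pairwise_append]
        refine ⟨List.pairwise_lt_range (n := N), ?_, ?_⟩
        · simp; omega
        · intro b hb e he
          have := List.mem_range.mp hb
          simp only [List.mem_cons, List.not_mem_nil, or_false] at he
          rcases he with rfl | rfl <;> omega
      have hC1 : complA t ((u ++ [c+1, c+2]) ++ v) = L1 := by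
        refine sortedEqOfMem _ _ (sorted_complA t _) hsortedL1 (fun y => ?_)
        rw [mem_complA, hL1]
        simp only [List.mem_append, List.mem_cons, List.not_mem_nil, or_false,
          List.mem_range, huR, hvstair, List.mem_range'_1]
        omega
      have hC2 : complA t ((u ++ [c, c+3]) ++ v) = L2 := by
        refine sortedEqOfMem _ _ (sorted_complA t _) hsortedL2 (fun y => ?_)
        rw [mem_complA, hL2]
        simp only [List.mem_append, List.mem_cons, List.not_mem_nil, or_false,
          List.mem_range, huR, hvstair, List.mem_range'_1]
        omega
      have hlenL1 : L1.length = N + 2 := by simp [hL1]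
      have hlenL2 : L2.length = N + 2 := by simp [hL2]
      have harith : ∀ p q : ℕ, p + q = 2*t - 2*c - 3 →
          (List.range N ++ [p, q]).sum = r + (N + 2) * ((N + 2) - 1) / 2 := by
        intro p q hpq
        have h1 := rangeSum2 N
        have h2 := twoMulPredDiv (N+2)
        have e3 : (N+2) * ((N+2)-1) = N*N + 3*N + 2 := by
          have hx : (N+2) - 1 = N+1 := by omega
          rw [hx]; ring
        have e4 : N * (N-1) = N*N - N := mulPred N
        have b1 : N ≤ N*N := leSq N
        simp only [List.sum_append, List.sum_cons, List.sum_nil]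
        omega
      have hTT1 : L1 ∈ TT r L1.length := by
        refine ⟨rfl, hsortedL1, ?_⟩
        rw [hlenL1, hL1]
        exact harith _ _ (by omega)
      have hTT2 : L2 ∈ TT r L2.length := by
        refine ⟨rfl, hsortedL2, ?_⟩
        rw [hlenL2, hL2]
        exact harith _ _ (by omega)
      obtain ⟨-, hind1⟩ := splitInduced hTT1 hL1 (by omega)
        (fun b hb => by have := List.mem_range.mp hb; omega)
      obtain ⟨-, hind2⟩ := splitInduced hTT2 hL2 (by omega)
        (fun b hb => by have := List.mem_range.mp hb; omega)
      rw [hC1, hC2]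
      refine ⟨2, by omega, by omega, ?_, ?_⟩
      · simpa using hind1
      · simpa using hind2
end

section
/- Let p ≥ 4 and suppose (a_*, a'_*) ∈ 𝔗_r^m × 𝔗_r^m satisfies (a_k, a_{k+1}) = (a, a+p), (a'_k, a'_{k+1}) = (a+1, a+p-1), a_s = a'_s for s ≠ k, k+1. Then (a_*, a'_*) is induced: there exists k₀ ∈ {1,...,r} such that decreasing the last k₀ entries of both sequences by 1 gives elements of 𝔗_{r-k₀}^m. -/
lemma two_mul_sum_ge : ∀ (l : List ℕ) (c : ℕ), l.Pairwise (· < ·) → (∀ x ∈ l, c ≤ x) →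
    2 * c * l.length + l.length * (l.length - 1) ≤ 2 * l.sum := by
  intro l
  induction l with
  | nil => simp
  | cons hd tl ih =>
    intro c hs hc
    have h1 : tl.Pairwise (· < ·) := hs.of_cons
    have h2 : ∀ x ∈ tl, c + 1 ≤ x := fun x hx =>
      Nat.succ_le_of_lt (lt_of_le_of_lt (hc hd (.head _)) (List.rel_of_pairwise_cons hs hx))
    have hih := ih (c + 1) h1 h2
    have hhd : c ≤ hd := hc hd (.head _)
    simp only [List.length_cons, List.sum_cons]
    rcases Nat.eq_zero_or_pos tl.length with h | h
    · simp [h]; omega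
    · obtain ⟨n, hn⟩ : ∃ n, tl.length = n + 1 := ⟨tl.length - 1, by omega⟩
      rw [hn] at hih ⊢
      simp only [Nat.add_sub_cancel] at hih ⊢
      nlinarith

lemma length_le_of_lt (l : List ℕ) (hl : l.Pairwise (· < ·)) (a : ℕ)
    (ha : ∀ x ∈ l, x < a) : l.length ≤ a := by
  have hnd : l.Nodup := hl.nodup
  have hsub : l.toFinset ⊆ Finset.range a := by
    intro x hx
    simp only [List.mem_toFinset] at hx
    simpa using ha x hx
  have := Finset.card_le_card hsub
  rwa [List.toFinset_card_of_nodup hnd, Finset.card_range] at this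

lemma map_sub_one_sum : ∀ (l : List ℕ), (∀ x ∈ l, 1 ≤ x) →
    (l.map (fun x => x - 1)).sum + l.length = l.sum := by
  intro l
  induction l with
  | nil => simp
  | cons hd tl ih =>
    intro h
    have h1 : 1 ≤ hd := h hd (.head _)
    have := ih (fun x hx => h x (.tail _ hx))
    simp only [List.map_cons, List.sum_cons, List.length_cons]
    omega

lemma map_sub_one_sorted (l : List ℕ) (hl : l.Pairwise (· < ·)) (h : ∀ x ∈ l, 1 ≤ x) :
    (l.map (fun x => x - 1)).Pairwise (· < ·) := by
  rw [List.pairwise_map]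
  refine hl.imp_of_mem ?_
  intro a b ha hb hab
  have := h a ha
  omega

lemma mul_pred_add (n : ℕ) : n * (n - 1) + n = n * n := by
  cases n with
  | zero => rfl
  | succ n => simp [Nat.succ_sub_one]; ring

lemma mem_TT_decLast (r m k : ℕ) (x y : List ℕ) (hk : y.length = k)
    (hkr : k ≤ r)
    (hmem : (x ++ y) ∈ TT r m) (hpos : ∀ t ∈ y, 1 ≤ t)
    (hgap : ∀ s ∈ x, ∀ t ∈ y, s + 1 < t) :
    decLast k (x ++ y) ∈ TT (r - k) m := by
  obtain ⟨hlen, hsort, hsum⟩ := hmem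
  obtain ⟨hx, hy, hxy⟩ := List.pairwise_append.mp hsort
  have hd : decLast k (x ++ y) = x ++ y.map (fun t => t - 1) := by
    unfold decLast
    rw [List.length_append, hk]
    have h1 : x.length + k - k = x.length := by omega
    rw [h1, List.take_left, List.drop_left]
  rw [hd]
  refine ⟨?_, ?_, ?_⟩
  · simpa using hlen
  · refine List.pairwise_append.mpr ⟨hx, map_sub_one_sorted y hy hpos, ?_⟩
    intro s hs t ht
    rw [List.mem_map] at ht
    obtain ⟨t', ht', rfl⟩ := ht
    have := hgap s hs t' ht'
    omega
  · rw [List.sum_append] at hsum ⊢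
    have hms := map_sub_one_sum y hpos
    rw [hk] at hms
    have hD : ∃ D, m * (m - 1) / 2 = D := ⟨_, rfl⟩
    obtain ⟨D, hDe⟩ := hD
    rw [hDe] at hsum ⊢
    omega

theorem stmt8 (r m p : ℕ) (hp : 4 ≤ p) (l l' : List ℕ)
    (hl : l ∈ TT r m) (hl' : l' ∈ TT r m) (hP : PairP p l l') :
    InducedT r l l' := by
  obtain ⟨a, u, v, h1, h2⟩ := hP
  set k := v.length + 1 with hkdef
  have hlx : l = (u ++ [a]) ++ ((a + p) :: v) := by rw [h1]; simp
  have hlx' : l' = (u ++ [a + 1]) ++ ((a + p - 1) :: v) := by rw [h2]; simp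
  have hlmem : ((u ++ [a]) ++ ((a + p) :: v)) ∈ TT r m := hlx ▸ hl
  have hlmem' : ((u ++ [a + 1]) ++ ((a + p - 1) :: v)) ∈ TT r m := hlx' ▸ hl'
  -- extract sortedness facts
  obtain ⟨hlen, hsort, hsum⟩ := hlmem
  obtain ⟨hx, hy, hxy⟩ := List.pairwise_append.mp hsort
  obtain ⟨hlen', hsort', hsum'⟩ := hlmem'
  obtain ⟨hx', hy', hxy'⟩ := List.pairwise_append.mp hsort'
  -- u entries are < a
  have hu : u.Pairwise (· < ·) := (List.pairwise_append.mp hx).1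
  have hua : ∀ s ∈ u, s < a := by
    intro s hs
    have := (List.pairwise_append.mp hx).2.2 s hs a (.head _)
    exact this
  -- every element of (a+p)::v is ≥ a + p
  have hyge : ∀ t ∈ (a + p) :: v, a + p ≤ t := by
    intro t ht
    rcases List.mem_cons.mp ht with rfl | ht
    · exact le_refl _
    · exact le_of_lt (List.rel_of_pairwise_cons hy ht)
  have hyge' : ∀ t ∈ (a + p - 1) :: v, a + p - 1 ≤ t := by
    intro t ht
    rcases List.mem_cons.mp ht with rfl | ht
    · exact le_refl _
    · have := hyge t (.tail _ ht)
      omega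
  -- k ≤ r
  have hulen : u.length ≤ a := length_le_of_lt u hu a hua
  have hkr : k ≤ r := by
    have hb1 : 2 * 0 * (u ++ [a]).length + (u ++ [a]).length * ((u ++ [a]).length - 1) ≤
        2 * (u ++ [a]).sum := two_mul_sum_ge _ 0 hx (fun _ _ => Nat.zero_le _)
    have hb2 : 2 * ((u ++ [a]).length + 1) * ((a + p) :: v).length +
        ((a + p) :: v).length * (((a + p) :: v).length - 1) ≤ 2 * ((a + p) :: v).sum := by
      refine two_mul_sum_ge _ _ hy ?_
      intro t ht
      have := hyge t ht
      simp only [List.length_append, List.length_singleton]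
      omega
    set n := (u ++ [a]).length with hn
    have hkl : ((a + p) :: v).length = k := by simp [hkdef]
    rw [hkl] at hb2
    have hm : m = n + k := by
      rw [List.length_append, hkl] at hlen
      omega
    have heven : ∃ c, m * (m - 1) = 2 * c := by
      rcases Nat.even_or_odd m with he | ho
      · obtain ⟨c, hc⟩ := he
        exact ⟨c * (m - 1), by rw [hc]; ring⟩
      · have : Even (m - 1) := Nat.Odd.sub_odd ho odd_one
        obtain ⟨c, hc⟩ := this
        exact ⟨m * c, by rw [hc]; ring⟩
    obtain ⟨c, hc⟩ := heven
    have hdiv : m * (m - 1) / 2 = c := by omega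
    rw [hdiv] at hsum
    have e1 : n * (n - 1) + n = n * n := mul_pred_add n
    have e2 : k * (k - 1) + k = k * k := mul_pred_add k
    have e3 : m * (m - 1) + m = m * m := mul_pred_add m
    have e4 : m * m = n * n + 2 * (n * k) + k * k := by rw [hm]; ring
    have e5 : 2 * (n + 1) * k = 2 * (n * k) + 2 * k := by ring
    have hsum2 : (u ++ [a]).sum + ((a + p) :: v).sum = r + c := by
      rw [List.sum_append] at hsum; exact hsum
    have hn1 : 1 ≤ n := by rw [hn]; simp
    nlinarith [hb1, hb2]
  -- memberships
  have hmem1 : decLast k ((u ++ [a]) ++ ((a + p) :: v)) ∈ TT (r - k) m := by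
    refine mem_TT_decLast r m k _ _ (by simp [hkdef]) hkr ⟨hlen, ?_, hsum⟩ ?_ ?_
    · exact List.pairwise_append.mpr ⟨hx, hy, hxy⟩
    · intro t ht; have := hyge t ht; omega
    · intro s hs t ht
      have hsa : s ≤ a := by
        rcases List.mem_append.mp hs with hs | hs
        · exact le_of_lt (hua s hs)
        · simp at hs; omega
      have := hyge t ht
      omega
  have hmem2 : decLast k ((u ++ [a + 1]) ++ ((a + p - 1) :: v)) ∈ TT (r - k) m := by
    refine mem_TT_decLast r m k _ _ (by simp [hkdef]) hkr ⟨hlen', ?_, hsum'⟩ ?_ ?_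
    · exact List.pairwise_append.mpr ⟨hx', hy', hxy'⟩
    · intro t ht; have := hyge' t ht; omega
    · intro s hs t ht
      have hsa : s ≤ a + 1 := by
        rcases List.mem_append.mp hs with hs | hs
        · have := (List.pairwise_append.mp hx').2.2 s hs (a + 1) (.head _)
          omega
        · simp at hs; omega
      have := hyge' t ht
      omega
  refine ⟨k, by omega, hkr, ?_, ?_⟩
  · rw [hlx, (hlx ▸ hl.1 : ((u ++ [a]) ++ ((a + p) :: v)).length = m)]
    exact hmem1
  · rw [hlx', (hlx' ▸ hl'.1 : ((u ++ [a + 1]) ++ ((a + p - 1) :: v)).length = m)]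
    exact hmem2
end

section
/- Let p ≥ 3 and suppose (a_*, a'_*) ∈ 𝔖_r^M × 𝔖_r^M satisfies: for some k and some a, (a_k, a_{k+1}) = (a, a+p), (a'_k, a'_{k+1}) = (a+1, a+p-1), and a_s = a'_s for s ≠ k, k+1. Then (a_*, a'_*) is induced: there exists k₀ ∈ {1,...,r} such that decreasing the last k₀ entries of both sequences by 1 yields elements of 𝔖_{r-k₀}^M. -/
namespace Stmt9Aux

def fS (n : ℕ) : ℕ := ∑ j ∈ Finset.range n, j / 2

lemma fS_succ (n : ℕ) : fS (n + 1) = fS n + n / 2 := Finset.sum_range_succ _ n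

lemma fS_two (n : ℕ) : fS (n + 2) = fS n + n := by
  rw [show n + 2 = (n+1)+1 from rfl, fS_succ, fS_succ]; omega

lemma four_fS (M : ℕ) : 4 * fS M + 2 * M = M ^ 2 + M % 2 := by
  induction M using Nat.strong_induction_on with
  | _ M ih =>
    match M with
    | 0 => simp [fS]
    | 1 => simp [fS]
    | (k+2) =>
      have h1 := ih k (by omega)
      have h2 : fS (k+2) = fS k + k := fS_two k
      have h3 : (k+2)^2 = k^2 + 4*k + 4 := by ring
      omega

lemma fS_add_le (m k : ℕ) : fS (m + k) ≤ fS m + k * (m / 2 + 1) + fS k := by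
  induction k with
  | zero => simp [fS]
  | succ k ih =>
    rw [show m + (k+1) = (m+k)+1 from rfl, fS_succ, fS_succ]
    have h1 : (m + k) / 2 ≤ m / 2 + k / 2 + 1 := by omega
    have h2 : (k+1) * (m/2 + 1) = k * (m/2+1) + (m/2 + 1) := by ring
    omega

lemma tail2_lb (x y : ℕ) (t : List ℕ) (c : ℕ) (hs : (x::y::t).Pairwise (· ≤ ·))
    (hc : ∀ z, (x::y::t).count z ≤ 2) (hge : ∀ e ∈ x::y::t, c ≤ e) :
    ∀ e ∈ t, c + 1 ≤ e := by
  intro e he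
  by_contra hcon
  have h1 : c ≤ e := hge e (by simp [he])
  have hec : e = c := by omega
  rw [List.pairwise_cons] at hs
  have hx : x ≤ e := hs.1 e (by simp [he])
  rw [List.pairwise_cons] at hs
  have hy : y ≤ e := hs.2.1 e he
  have hxc : x = c := by have := hge x (by simp); omega
  have hyc : y = c := by have := hge y (by simp); omega
  have h2 := hc c
  have h3 : 0 < t.count c := List.count_pos_iff.2 (hec ▸ he)
  simp [List.count_cons, hxc, hyc] at h2
  omega

lemma sumLB : ∀ N (l : List ℕ) (c : ℕ), l.length = N → l.Pairwise (· ≤ ·) →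
    (∀ x, l.count x ≤ 2) → (∀ e ∈ l, c ≤ e) → c * N + fS N ≤ l.sum := by
  intro N
  induction N using Nat.strong_induction_on with
  | _ N ih =>
    intro l c hlen hs hc hge
    match l, hlen with
    | [], rfl => simp [fS]
    | [x], rfl =>
      have := hge x (by simp)
      simp [fS]; omega
    | (x::y::t), rfl =>
      have hge' : ∀ e ∈ t, c + 1 ≤ e := tail2_lb x y t c hs hc hge
      have hsub : t.Sublist (x::y::t) := (List.sublist_cons_self y t).trans (List.sublist_cons_self x _)
      have hct : ∀ z, t.count z ≤ 2 := fun z => (hsub.count_le z).trans (hc z)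
      have hst : t.Pairwise (· ≤ ·) := hs.sublist hsub
      have hkey := ih t.length (by simp) t (c+1) rfl hst hct hge'
      have hx : c ≤ x := hge x (by simp)
      have hy : c ≤ y := hge y (by simp)
      have hlen2 : (x::y::t).length = t.length + 2 := by simp
      rw [hlen2, fS_two]
      have h2 : c * (t.length + 2) = c * t.length + 2 * c := by ring
      have h3 : (c+1) * t.length = c * t.length + t.length := by ring
      simp only [List.sum_cons]
      omega

lemma lastLB : ∀ N (u : List ℕ) (c b : ℕ), u.length = N → (u ++ [b]).Pairwise (· ≤ ·) →
    (∀ x, (u ++ [b]).count x ≤ 2) → (∀ e ∈ u ++ [b], c ≤ e) → c + u.length / 2 ≤ b := by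
  intro N
  induction N using Nat.strong_induction_on with
  | _ N ih =>
    intro u c b hlen hs hc hge
    match u, hlen with
    | [], rfl => have := hge b (by simp); simpa using this
    | [x], rfl => have := hge b (by simp); simpa using this
    | (x::y::t), rfl =>
      have hge' : ∀ e ∈ t ++ [b], c + 1 ≤ e := tail2_lb x y (t ++ [b]) c hs hc hge
      have hsub : (t ++ [b]).Sublist (x::y::(t++[b])) :=
        (List.sublist_cons_self y _).trans (List.sublist_cons_self x _)
      have hct : ∀ z, (t ++ [b]).count z ≤ 2 := fun z => (hsub.count_le z).trans (hc z)
      have hst : (t ++ [b]).Pairwise (· ≤ ·) := hs.sublist hsub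
      have hkey := ih t.length (by simp) t (c+1) b rfl hst hct hge'
      have hlen2 : (x::y::t).length = t.length + 2 := by simp
      omega

lemma count_map_pred (v : List ℕ) (hv : ∀ e ∈ v, 1 ≤ e) (x : ℕ) :
    (v.map (fun t => t - 1)).count x = v.count (x + 1) := by
  induction v with
  | nil => simp
  | cons e t ih =>
    have he : 1 ≤ e := hv e (by simp)
    have iht := ih (fun e he' => hv e (by simp [he']))
    by_cases h : e = x + 1
    · simp [List.count_cons, h, iht]
    · have h2 : ¬ (e - 1 = x) := by omega
      simp [List.count_cons, h, h2, iht]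

lemma sum_map_pred (v : List ℕ) (hv : ∀ e ∈ v, 1 ≤ e) :
    (v.map (fun t => t - 1)).sum + v.length = v.sum := by
  induction v with
  | nil => simp
  | cons e t ih =>
    have he : 1 ≤ e := hv e (by simp)
    have iht := ih (fun e he' => hv e (by simp [he']))
    simp only [List.map_cons, List.sum_cons, List.length_cons]
    omega

lemma core (u v : List ℕ) (b c : ℕ) (hbc : b + 1 ≤ c)
    (hus : u.Pairwise (· ≤ ·)) (hvs : v.Pairwise (· ≤ ·))
    (hub : ∀ e ∈ u, e ≤ b) (hvc : ∀ e ∈ v, c ≤ e)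
    (hcnt : ∀ x, (u ++ b :: c :: v).count x ≤ 2)
    (hjunc : (u ++ b :: c :: v).count (c-1) + (u ++ b :: c :: v).count c ≤ 2) :
    (u ++ b :: (c-1) :: v.map (fun t => t - 1)).Pairwise (· ≤ ·) ∧
    (∀ x, (u ++ b :: (c-1) :: v.map (fun t => t - 1)).count x ≤ 2) ∧
    (u ++ b :: (c-1) :: v.map (fun t => t - 1)).sum + (v.length + 1) = (u ++ b :: c :: v).sum ∧
    (u ++ b :: (c-1) :: v.map (fun t => t - 1)).length = (u ++ b :: c :: v).length := by
  have hv1 : ∀ e ∈ v, 1 ≤ e := fun e he => le_trans (by omega) (hvc e he)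
  have hmap : ∀ y ∈ v.map (fun t => t - 1), c - 1 ≤ y := by
    intro y hy
    obtain ⟨t, ht, rfl⟩ := List.mem_map.1 hy
    have := hvc t ht; omega
  refine ⟨?_, ?_, ?_, ?_⟩
  · rw [List.pairwise_append]
    refine ⟨hus, ?_, ?_⟩
    · rw [List.pairwise_cons]
      constructor
      · intro e he
        rcases (by simpa using he : e = c - 1 ∨ e ∈ v.map (fun t => t - 1)) with h | h
        · omega
        · have := hmap e h; omega
      · rw [List.pairwise_cons]
        exact ⟨fun e he => hmap e he,
          List.Pairwise.map _ (fun a b h => Nat.sub_le_sub_right h 1) hvs⟩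
    · intro x hx y hy
      have h1 : x ≤ b := hub x hx
      rcases (by simpa using hy : y = b ∨ y = c - 1 ∨ y ∈ v.map (fun t => t - 1)) with h|h|h
      · omega
      · omega
      · have := hmap y h; omega
  · intro x
    have hL : (u ++ b :: (c-1) :: v.map (fun t => t - 1)).count x
        = u.count x + ((if b = x then 1 else 0) + ((if c - 1 = x then 1 else 0)
          + v.count (x+1))) := by
      rw [List.count_append, List.count_cons, List.count_cons, count_map_pred v hv1 x]
      simp only [beq_iff_eq]
      omega
    have hW : ∀ y, (u ++ b :: c :: v).count y
        = u.count y + ((if b = y then 1 else 0) + ((if c = y then 1 else 0) + v.count y)) := by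
      intro y
      rw [List.count_append, List.count_cons, List.count_cons]
      simp only [beq_iff_eq]
      omega
    rcases Nat.lt_trichotomy (x+1) c with h | h | h
    · have h1 : v.count (x+1) = 0 :=
        List.count_eq_zero.2 (fun hm => by have := hvc _ hm; omega)
      have h2 := hcnt x
      rw [hW x] at h2
      rw [hL, h1, if_neg (by omega : ¬ c - 1 = x)]
      split_ifs at h2 ⊢ <;> omega
    · have hx : x = c - 1 := by omega
      subst hx
      rw [hW (c-1), hW c] at hjunc
      rw [hL]
      have hv0 : v.count (c-1) = 0 :=
        List.count_eq_zero.2 (fun hm => by have := hvc _ hm; omega)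
      rw [show c - 1 + 1 = c by omega] at *
      split_ifs at hjunc ⊢ <;> omega
    · have h1 : u.count x = 0 :=
        List.count_eq_zero.2 (fun hm => by have := hub _ hm; omega)
      have h2 := hcnt (x+1)
      rw [hW (x+1)] at h2
      rw [hL, h1, if_neg (by omega : ¬ b = x), if_neg (by omega : ¬ c - 1 = x)]
      split_ifs at h2 ⊢ <;> omega
  · have hsm := sum_map_pred v hv1
    simp only [List.sum_append, List.sum_cons, List.length_map] at *
    omega
  · simp

end Stmt9Aux

theorem stmt9 (r M p ε : ℕ) (hp : 3 ≤ p) (hε : ε ≤ 1) (hM : ∃ n, M = ε + 2 * n)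
    (l l' : List ℕ) (hl : l ∈ SS r M ε) (hl' : l' ∈ SS r M ε) (hP : PairP p l l') :
    InducedS r ε l l' := by
  classical
  open Stmt9Aux in
  obtain ⟨a, u, v, hleq, hl'eq⟩ := hP
  obtain ⟨n0, hMn⟩ := hM
  subst hleq; subst hl'eq
  obtain ⟨hlen, hsort, hcnt, hsum⟩ := hl
  obtain ⟨hlen', hsort', hcnt', hsum'⟩ := hl'
  set m := u.length with hm
  set n := v.length with hn
  -- structural facts about u, v from sortedness of l
  have hWeq : u ++ [a, a + p] ++ v = u ++ a :: (a + p) :: v := by simp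
  have hW'eq : u ++ [a + 1, a + p - 1] ++ v = u ++ (a+1) :: (a + p - 1) :: v := by simp
  rw [hWeq] at hsort hcnt hsum hlen
  rw [hW'eq] at hsort' hcnt' hsum' hlen'
  rw [List.pairwise_append] at hsort
  obtain ⟨hus, htail, hcross⟩ := hsort
  rw [List.pairwise_cons] at htail
  obtain ⟨ha_le, htail2⟩ := htail
  rw [List.pairwise_cons] at htail2
  obtain ⟨hap_le, hvs⟩ := htail2
  have hub : ∀ e ∈ u, e ≤ a := fun e he => hcross e he a (by simp)
  have hvc : ∀ e ∈ v, a + p ≤ e := fun e he => hap_le e he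
  have hlenM : M = m + n + 2 := by
    rw [← hlen]; simp [hm, hn]; omega
  -- the junction hypotheses
  have hmemW : ∀ x : ℕ, a < x → x < a + p → (u ++ a :: (a+p) :: v).count x = 0 := by
    intro x h1 h2
    refine List.count_eq_zero.2 (fun hm' => ?_)
    rcases (by simpa using hm' : x ∈ u ∨ x = a ∨ x = a + p ∨ x ∈ v) with h|h|h|h
    · have := hub x h; omega
    · omega
    · omega
    · have := hvc x h; omega
  have hjunc : (u ++ a :: (a+p) :: v).count (a + p - 1)
      + (u ++ a :: (a+p) :: v).count (a+p) ≤ 2 := by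
    have h0 : (u ++ a :: (a+p) :: v).count (a + p - 1) = 0 := hmemW _ (by omega) (by omega)
    rw [h0]; simpa using hcnt (a+p)
  have hcu : ∀ x : ℕ, a < x → u.count x = 0 := by
    intro x hx
    exact List.count_eq_zero.2 (fun hm' => by have := hub x hm'; omega)
  have hcv : ∀ x : ℕ, x < a + p → v.count x = 0 := by
    intro x hx
    exact List.count_eq_zero.2 (fun hm' => by have := hvc x hm'; omega)
  have hjunc' : (u ++ (a+1) :: (a+p-1) :: v).count (a + p - 1 - 1)
      + (u ++ (a+1) :: (a+p-1) :: v).count (a+p-1) ≤ 2 := by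
    rw [List.count_append, List.count_append, List.count_cons, List.count_cons,
      List.count_cons, List.count_cons]
    simp only [beq_iff_eq]
    rw [hcu (a+p-1-1) (by omega), hcu (a+p-1) (by omega),
      hcv (a+p-1-1) (by omega), hcv (a+p-1) (by omega)]
    split_ifs <;> omega
  -- apply the core lemma to both lists
  have hcore := core u v a (a+p) (by omega) hus hvs hub hvc hcnt hjunc
  have hcore' := core u v (a+1) (a+p-1) (by omega) hus hvs
    (fun e he => by have := hub e he; omega)
    (fun e he => by have := hvc e he; omega) hcnt' hjunc'
  -- the lower bound k₀ = n + 1 ≤ r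
  have hX : (M ^ 2 - 2 * M + ε) / 4 = fS M := by
    have h4 := four_fS M
    have hmod : M % 2 = ε := by omega
    omega
  have hsum2 : u.sum + a + (a + p) + v.sum = r + fS M := by
    rw [← hX]
    simp only [List.sum_append, List.sum_cons] at hsum
    omega
  have hsubu : (u ++ [a]).Sublist (u ++ a :: (a+p) :: v) :=
    List.Sublist.append_left (by simp) u
  have h_u : fS m ≤ u.sum := by
    have := sumLB m u 0 rfl hus
      (fun z => ((List.sublist_append_left u (a :: (a+p) :: v)).count_le z).trans (hcnt z))
      (fun e _ => Nat.zero_le e)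
    simpa using this
  have hsortua : (u ++ [a]).Pairwise (· ≤ ·) := by
    refine List.Pairwise.sublist hsubu ?_
    rw [List.pairwise_append]
    refine ⟨hus, ?_, hcross⟩
    rw [List.pairwise_cons]
    exact ⟨ha_le, by rw [List.pairwise_cons]; exact ⟨hap_le, hvs⟩⟩
  have h_a : m / 2 ≤ a := by
    have := lastLB m u 0 a rfl hsortua
      (fun z => (hsubu.count_le z).trans (hcnt z)) (fun e _ => Nat.zero_le e)
    simpa using this
  have h_v : (a + p) * n + fS n ≤ v.sum := by
    refine sumLB n v (a+p) rfl hvs (fun z => ?_) hvc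
    have hsubv : v.Sublist (u ++ a :: (a+p) :: v) := by
      rw [← hWeq]; exact List.sublist_append_right _ v
    exact (hsubv.count_le z).trans (hcnt z)
  have h_fM : fS M ≤ fS m + (n + 2) * (m / 2 + 1) + fS n + n := by
    rw [hlenM, show m + n + 2 = m + (n + 2) from rfl]
    have h1 := fS_add_le m (n + 2)
    have h2 := fS_two n
    omega
  have hr : n + 1 ≤ r := by
    have hq : (a + p) * n ≥ (m / 2 + 3) * n := Nat.mul_le_mul_right n (by omega)
    have he1 : (m / 2 + 3) * n = m / 2 * n + 3 * n := by ring
    have he2 : (n + 2) * (m / 2 + 1) = m / 2 * n + n + 2 * (m / 2) + 2 := by ring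
    omega
  -- decLast computations
  have hlenl : (u ++ [a, a+p] ++ v).length = m + n + 2 := by rw [hWeq, ← hlenM, hlen]
  have hlenl' : (u ++ [a+1, a+p-1] ++ v).length = m + n + 2 := by rw [hW'eq, ← hlenM, hlen']
  have hdl : decLast (n+1) (u ++ [a, a+p] ++ v)
      = u ++ a :: (a + p - 1) :: v.map (fun t => t - 1) := by
    unfold decLast
    rw [hlenl, show m + n + 2 - (n+1) = m + 1 by omega]
    rw [show u ++ [a, a+p] ++ v = (u ++ [a]) ++ ((a+p) :: v) by simp]
    rw [List.take_left' (by simp [hm]), List.drop_left' (by simp [hm])]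
    simp
  have hdl' : decLast (n+1) (u ++ [a+1, a+p-1] ++ v)
      = u ++ (a+1) :: (a + p - 1 - 1) :: v.map (fun t => t - 1) := by
    unfold decLast
    rw [hlenl', show m + n + 2 - (n+1) = m + 1 by omega]
    rw [show u ++ [a+1, a+p-1] ++ v = (u ++ [a+1]) ++ ((a+p-1) :: v) by simp]
    rw [List.take_left' (by simp [hm]), List.drop_left' (by simp [hm])]
    simp
  refine ⟨n + 1, by omega, hr, ?_, ?_⟩
  · rw [hdl]
    obtain ⟨hs1, hc1, hsum1, hlen1⟩ := hcore
    refine ⟨?_, hs1, hc1, ?_⟩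
    · rw [hlen1, ← hWeq]
    · have hll : (u ++ [a, a + p] ++ v).length = M := by rw [hWeq]; exact hlen
      rw [hll, hX]
      omega
  · rw [hdl']
    obtain ⟨hs1, hc1, hsum1, hlen1⟩ := hcore'
    have hll' : (u ++ [a + 1, a + p - 1] ++ v).length = M := by rw [hW'eq]; exact hlen'
    refine ⟨?_, hs1, hc1, ?_⟩
    · rw [hlen1, ← hW'eq]
    · rw [hll', hX]
      have hsum2' : u.sum + (a+1) + (a+p-1) + v.sum = r + fS M := by
        rw [← hX]
        simp only [List.sum_append, List.sum_cons] at hsum'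
        omega
      simp only [List.sum_append, List.sum_cons] at hsum1 hsum2' ⊢
      omega
end

section
/- Let a_* ∈ 𝔖_r^M and let ã_* = (0, 0, a₁+1, a₂+1, ..., a_M+1) ∈ 𝔖_r^{M+2}. Then for t ≥ a_M, ã_*^{!(t+1)} = a_*^{!t}; consequently the operation a_* ↦ a_*^{!t} induces a well-defined involution ξ ↦ ξ^• on the set of equivalence classes ^ε𝔖_r. -/
lemma sum_map_succ (l : List ℕ) : (l.map (· + 1)).sum = l.sum + l.length := by
  induction l with
  | nil => simp
  | cons a l ih => simp [ih]; omega

lemma arith_aux (ε n : ℕ) (hε : ε ≤ 1) :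
    ((ε + 2 * n) ^ 2 - 2 * (ε + 2 * n) + ε) / 4 + (ε + 2 * n) =
      ((ε + 2 * n + 2) ^ 2 - 2 * (ε + 2 * n + 2) + ε) / 4 := by
  obtain rfl | rfl : ε = 0 ∨ ε = 1 := by omega
  · have a1 : (0 + 2 * n) ^ 2 = 4 * (n * n) := by ring
    have a2 : (0 + 2 * n + 2) ^ 2 = 4 * (n * n) + 8 * n + 4 := by ring
    have hnn : n ≤ n * n := by nlinarith
    rw [a1, a2]; omega
  · have a1 : (1 + 2 * n) ^ 2 = 4 * (n * n) + 4 * n + 1 := by ring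
    have a2 : (1 + 2 * n + 2) ^ 2 = 4 * (n * n) + 12 * n + 9 := by ring
    have hnn : n ≤ n * n := by nlinarith
    rw [a1, a2]; omega

lemma count_map_succ (l : List ℕ) (y : ℕ) : (l.map (· + 1)).count (y + 1) = l.count y :=
  List.count_map_of_injective _ _ (add_left_injective 1) _

theorem stmt11 (r M t ε : ℕ) (hε : ε ≤ 1) (hM : ∃ n, M = ε + 2 * n)
    (l : List ℕ) (hl : l ∈ SS r M ε) (ht : ∀ x ∈ l, x ≤ t) :
    shS l ∈ SS r (M + 2) ε ∧ complB (t + 1) (shS l) = complB t l := by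
  obtain ⟨hlen, hsort, hcount, hsum⟩ := hl
  have hc0 : (shS l).count 0 = 2 := by
    have : (0:ℕ) ∉ l.map (· + 1) := by simp
    simp [shS, List.count_cons, List.count_eq_zero.mpr this]
  have hcs : ∀ y, (shS l).count (y + 1) = l.count y := by
    intro y
    simp [shS, List.count_cons, count_map_succ]
  constructor
  · refine ⟨by simp [shS, hlen], ?_, ?_, ?_⟩
    · simp only [shS, List.pairwise_cons]
      refine ⟨?_, ?_, List.Pairwise.map _ (fun a b h => by omega) hsort⟩ <;>
        intro b hb <;> omega
    · intro x
      cases x with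
      | zero => exact hc0.le
      | succ y => rw [hcs]; exact hcount y
    · obtain ⟨n, rfl⟩ := hM
      have hs : (shS l).sum = l.sum + (ε + 2 * n) := by
        simp [shS, sum_map_succ, hlen]
      rw [hs, hsum]
      have := arith_aux ε n hε
      omega
  · have e2 : complB (t + 1) (shS l) =
        (List.range (t + 1)).flatMap
          (fun x => List.replicate (2 - (shS l).count (t + 1 - x)) x) ++
          List.replicate (2 - (shS l).count 0) (t + 1) := by
      rw [complB, show t + 1 + 1 = t + 2 from rfl, List.range_succ, List.flatMap_append]
      simp
    rw [e2, hc0]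
    simp only [Nat.sub_self, List.replicate_zero, List.append_nil]
    rw [complB]
    refine List.flatMap_congr fun x hx => ?_
    have hx' : x ≤ t := by simp [List.mem_range] at hx; omega
    rw [show t + 1 - x = (t - x) + 1 by omega, hcs]
end

section
/- Let p ≥ 3 and suppose (a_*, a'_*) ∈ 𝔖_r^M × 𝔖_r^M satisfies (a_k, a_{k+1}) = (a, a+p), (a'_k, a'_{k+1}) = (a+1, a+p-1), a_s = a'_s for s ≠ k, k+1. Then for t ≥ max(a_M, a'_M), the complements (b_*, b'_*) = (a'_*^{!t}, a_*^{!t}) satisfy: there exist an index k' and a value b such that the entries of b_* at positions k' through k'+2p-4 are (b, b+1, b+2, b+2, b+3, b+3, ..., b+p-2, b+p-2, b+p-1, b+p), the entries of b'_* at those positions are (b+1, b+1, b+2, b+2, ..., b+p-2, b+p-2, b+p-1, b+p-1), and b_s = b'_s at all other positions. That is, the map (ξ, ξ') ↦ (ξ'^•, ξ^•) carries (^ε𝔖_r × ^ε𝔖_r)_p into (^ε𝔖_r × ^ε𝔖_r)'_p. -/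
private lemma range'_concat1 (s n : ℕ) :
    List.range' s (n + 1) = List.range' s n ++ [s + n] := by
  simpa using List.range'_concat (step := 1) (s := s) (n := n)


theorem stmt12 (r M t p ε : ℕ) (hp : 3 ≤ p) (hε : ε ≤ 1) (hM : ∃ n, M = ε + 2 * n)
    (l l' : List ℕ) (hl : l ∈ SS r M ε) (hl' : l' ∈ SS r M ε) (hP : PairP p l l')
    (ht : ∀ x ∈ l, x ≤ t) (ht' : ∀ x ∈ l', x ≤ t) :
    ∃ b u v, complB t l' = u ++ listB p b ++ v ∧
      complB t l = u ++ listB' p b ++ v := by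
  obtain ⟨q, rfl⟩ : ∃ q, p = q + 3 := ⟨p - 3, by omega⟩
  obtain ⟨a, u, v, hlu, hl'u⟩ := hP
  have htap : a + (q + 3) ≤ t := ht (a + (q + 3)) (by rw [hlu]; simp)
  obtain ⟨b, rfl⟩ : ∃ b, t = a + (q + 3) + b := ⟨t - (a + (q + 3)), by omega⟩
  set t := a + (q + 3) + b with htdef
  obtain ⟨-, hsort, hcnt, -⟩ := hl
  rw [hlu] at hsort
  rw [List.pairwise_append, List.pairwise_append] at hsort
  have hu : ∀ x ∈ u, x ≤ a := fun x hx => hsort.1.2.2 x hx a (by simp)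
  have hv : ∀ x ∈ v, a + (q + 3) ≤ x := fun x hx => hsort.2.2 (a + (q+3)) (by simp) x hx
  have hcu0 : ∀ y, a < y → u.count y = 0 := fun y hy =>
    List.count_eq_zero.2 (fun hmem => absurd (hu y hmem) (by omega))
  have hcv0 : ∀ y, y < a + (q + 3) → v.count y = 0 := fun y hy =>
    List.count_eq_zero.2 (fun hmem => absurd (hv y hmem) (by omega))
  have key : ∀ y, l.count y = u.count y + v.count y
      + (if y = a then 1 else 0) + (if y = a + (q + 3) then 1 else 0) := by
    intro y
    simp only [hlu, List.count_append, List.count_cons, List.count_nil, beq_iff_eq]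
    split_ifs <;> omega
  have key' : ∀ y, l'.count y = u.count y + v.count y
      + (if y = a + 1 then 1 else 0) + (if y = a + (q + 3) - 1 then 1 else 0) := by
    intro y
    simp only [hl'u, List.count_append, List.count_cons, List.count_nil, beq_iff_eq]
    split_ifs <;> omega
  have e1 : l.count a = u.count a + 1 := by
    rw [key a, hcv0 a (by omega)]; split_ifs <;> omega
  have e1' : l'.count a = u.count a := by
    rw [key' a, hcv0 a (by omega)]; split_ifs <;> omega
  have e2 : l.count (a + (q + 3)) = v.count (a + (q + 3)) + 1 := by
    rw [key _, hcu0 _ (by omega)]; split_ifs <;> omega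
  have e2' : l'.count (a + (q + 3)) = v.count (a + (q + 3)) := by
    rw [key' _, hcu0 _ (by omega)]; split_ifs <;> omega
  have emid : ∀ y, a < y → y < a + (q + 3) → l.count y = 0 := by
    intro y h1 h2
    rw [key y, hcu0 y h1, hcv0 y h2]; split_ifs <;> omega
  have e3' : l'.count (a + 1) = 1 := by
    rw [key' _, hcu0 _ (by omega), hcv0 _ (by omega)]; split_ifs <;> omega
  have e4' : l'.count (a + (q + 2)) = 1 := by
    rw [key' _, hcu0 _ (by omega), hcv0 _ (by omega)]; split_ifs <;> omega
  have emid' : ∀ y, a + 1 < y → y < a + (q + 2) → l'.count y = 0 := by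
    intro y h1 h2
    rw [key' y, hcu0 y (by omega), hcv0 y (by omega)]; split_ifs <;> omega
  have eout : ∀ y, y < a ∨ a + (q + 3) < y → l.count y = l'.count y := by
    intro y hy
    rw [key y, key' y]; split_ifs <;> omega
  have hub : u.count a ≤ 1 := by have := hcnt a; omega
  have hvb : v.count (a + (q + 3)) ≤ 1 := by have := hcnt (a + (q + 3)); omega
  -- range decomposition
  have hrange : List.range (t + 1) =
      List.range b ++ (List.range' b (q + 4) ++ List.range' (b + (q + 4)) a) := by
    have h1 : List.range' b (q + 4) ++ List.range' (b + (q + 4)) a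
        = List.range' b (a + (q + 4)) := Nat.add_comm (q + 4) a ▸ List.range'_append_1 (s := b) (m := q + 4) (n := a)
    have h2 : List.range' 0 b ++ List.range' b (a + (q + 4)) = List.range' 0 (a + (q + 4) + b) := by
      simpa [Nat.add_comm b] using List.range'_append_1 (s := 0) (m := b) (n := a + (q + 4))
    rw [h1, List.range_eq_range', List.range_eq_range',
      show t + 1 = a + (q + 4) + b by omega, ← h2]
  have hcompl : ∀ m : List ℕ, complB t m =
      (List.range b).flatMap (fun x => List.replicate (2 - m.count (t - x)) x)
      ++ ((List.range' b (q + 4)).flatMap (fun x => List.replicate (2 - m.count (t - x)) x)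
      ++ (List.range' (b + (q + 4)) a).flatMap
          (fun x => List.replicate (2 - m.count (t - x)) x)) := by
    intro m
    rw [complB, hrange, List.flatMap_append, List.flatMap_append]
  have s1 : List.range' b (q + 4) = List.range' b (q + 3) ++ [b + (q + 3)] :=
    range'_concat1 b (q + 3)
  have s2 : List.range' b (q + 3) = List.range' b (q + 2) ++ [b + (q + 2)] :=
    range'_concat1 b (q + 2)
  have s3a : List.range' b (q + 2) = b :: List.range' (b + 1) (q + 1) :=
    List.range'_succ (s := b) (n := q + 1) (step := 1)
  have s3b : List.range' (b + 1) (q + 1) = (b + 1) :: List.range' (b + 2) q := by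
    simpa using List.range'_succ (s := b + 1) (n := q) (step := 1)
  have s4 : List.range' b (q + 3) = b :: List.range' (b + 1) (q + 2) :=
    List.range'_succ (s := b) (n := q + 2) (step := 1)
  have hmid2 : List.range' b (q + 4) = b :: (List.range' (b + 1) (q + 2) ++ [b + (q + 3)]) := by
    rw [s1, s4]
    simp
  have hmid1 : List.range' b (q + 4) =
      b :: ((b + 1) :: (List.range' (b + 2) q ++ ([b + (q + 2)] ++ [b + (q + 3)]))) := by
    rw [s1, s2, s3a, s3b]
    simp [List.append_assoc]
  have hA0 : (List.range b).flatMap (fun x => List.replicate (2 - l'.count (t - x)) x)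
      = (List.range b).flatMap (fun x => List.replicate (2 - l.count (t - x)) x) := by
    apply List.flatMap_congr
    intro x hx
    rw [List.mem_range] at hx
    rw [eout (t - x) (by omega)]
  have hA1 : (List.range' (b + (q + 4)) a).flatMap
        (fun x => List.replicate (2 - l'.count (t - x)) x)
      = (List.range' (b + (q + 4)) a).flatMap
        (fun x => List.replicate (2 - l.count (t - x)) x) := by
    apply List.flatMap_congr
    intro x hx
    rw [List.range'_eq_map_range, List.mem_map] at hx
    obtain ⟨i, hi, rfl⟩ := hx
    rw [List.mem_range] at hi
    rw [eout (t - (b + (q + 4) + i)) (by omega)]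
  have hMl : (List.range' (b + 1) (q + 2)).flatMap
        (fun x => List.replicate (2 - l.count (t - x)) x)
      = (List.range (q + 2)).flatMap (fun i => [b + 1 + i, b + 1 + i]) := by
    rw [List.range'_eq_map_range, List.flatMap_map]
    apply List.flatMap_congr
    intro i hi
    rw [List.mem_range] at hi
    have h1 : t - (b + 1 + i) = a + (q + 2) - i := by omega
    have h2 : l.count (a + (q + 2) - i) = 0 := emid _ (by omega) (by omega)
    show List.replicate (2 - l.count (t - (b + 1 + i))) (b + 1 + i) = _
    rw [h1, h2]
    rfl
  have hMl' : (List.range' (b + 2) q).flatMap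
        (fun x => List.replicate (2 - l'.count (t - x)) x)
      = (List.range q).flatMap (fun i => [b + 2 + i, b + 2 + i]) := by
    rw [List.range'_eq_map_range, List.flatMap_map]
    apply List.flatMap_congr
    intro i hi
    rw [List.mem_range] at hi
    have h1 : t - (b + 2 + i) = a + (q + 1) - i := by omega
    have h2 : l'.count (a + (q + 1) - i) = 0 := emid' _ (by omega) (by omega)
    show List.replicate (2 - l'.count (t - (b + 2 + i))) (b + 2 + i) = _
    rw [h1, h2]
    rfl
  -- single values
  have hFb : List.replicate (2 - l.count (t - b)) b
      = List.replicate (1 - v.count (a + (q + 3))) b := by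
    rw [show t - b = a + (q + 3) by omega, e2]
    congr 1
    omega
  have hF'b : List.replicate (2 - l'.count (t - b)) b
      = List.replicate (1 - v.count (a + (q + 3))) b ++ [b] := by
    rw [show t - b = a + (q + 3) by omega, e2',
      show 2 - v.count (a + (q + 3)) = (1 - v.count (a + (q + 3))) + 1 by omega,
      List.replicate_succ']
  have hFtop : List.replicate (2 - l.count (t - (b + (q + 3)))) (b + (q + 3))
      = List.replicate (1 - u.count a) (b + (q + 3)) := by
    rw [show t - (b + (q + 3)) = a by omega, e1]
    congr 1
    omega
  have hF'top : List.replicate (2 - l'.count (t - (b + (q + 3)))) (b + (q + 3))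
      = (b + (q + 3)) :: List.replicate (1 - u.count a) (b + (q + 3)) := by
    rw [show t - (b + (q + 3)) = a by omega, e1',
      show 2 - u.count a = (1 - u.count a) + 1 by omega, List.replicate_succ]
  have hF'1 : List.replicate (2 - l'.count (t - (b + 1))) (b + 1) = [b + 1] := by
    rw [show t - (b + 1) = a + (q + 2) by omega, e4']
    rfl
  have hF'2 : List.replicate (2 - l'.count (t - (b + (q + 2)))) (b + (q + 2)) = [b + (q + 2)] := by
    rw [show t - (b + (q + 2)) = a + 1 by omega, e3']
    rfl
  have hlistB : listB (q + 3) b = b :: (b + 1) ::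
      ((List.range q).flatMap (fun i => [b + 2 + i, b + 2 + i]) ++ [b + (q + 2), b + (q + 3)]) := by
    simp only [listB, show q + 3 - 3 = q by omega, show b + (q + 3) - 1 = b + (q + 2) by omega]
    rfl
  have hlistB' : listB' (q + 3) b
      = (List.range (q + 2)).flatMap (fun i => [b + 1 + i, b + 1 + i]) := by
    simp only [listB', show q + 3 - 1 = q + 2 by omega]
  -- assemble
  refine ⟨b,
    (List.range b).flatMap (fun x => List.replicate (2 - l.count (t - x)) x)
      ++ List.replicate (1 - v.count (a + (q + 3))) b,
    List.replicate (1 - u.count a) (b + (q + 3))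
      ++ (List.range' (b + (q + 4)) a).flatMap
        (fun x => List.replicate (2 - l.count (t - x)) x), ?_, ?_⟩
  · rw [hcompl l', hmid1]
    simp only [List.flatMap_cons, List.flatMap_append, List.flatMap_nil, List.append_nil]
    rw [hA0, hA1, hF'b, hF'1, hF'2, hF'top, hMl', hlistB]
    simp [List.append_assoc]
  · rw [hcompl l, hmid2]
    simp only [List.flatMap_cons, List.flatMap_append, List.flatMap_nil, List.append_nil]
    rw [hFb, hFtop, hMl, hlistB']
    simp [List.append_assoc]
end

section
/- Suppose (a_*, a'_*) ∈ 𝔖_r^M × 𝔖_r^M satisfies (a_k, a_{k+1}) = (a, a+2), (a'_k, a'_{k+1}) = (a+1, a+1), a_s = a'_s for s ≠ k, k+1 (the case p = 2). Then for t ≥ max(a_M, a'_M), the pair (a'_*^{!t}, a_*^{!t}) is again of the same form: there exist an index k' and a value b with the entries of a'_*^{!t} at positions k', k'+1 equal to (b, b+2), the entries of a_*^{!t} at those positions equal to (b+1, b+1), and all other entries agreeing. -/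
theorem stmt13 (r M t ε : ℕ) (hε : ε ≤ 1) (hM : ∃ n, M = ε + 2 * n)
    (l l' : List ℕ) (hl : l ∈ SS r M ε) (hl' : l' ∈ SS r M ε) (hP : PairP 2 l l')
    (ht : ∀ x ∈ l, x ≤ t) (ht' : ∀ x ∈ l', x ≤ t) :
    PairP 2 (complB t l') (complB t l) := by
  obtain ⟨-, -, hcnt, -⟩ := hl
  obtain ⟨-, -, hcnt', -⟩ := hl'
  obtain ⟨a, u, v, hL, hL'⟩ := hP
  have ha2t : a + 2 ≤ t := ht _ (by simp [hL])
  set m₀ := (u ++ v).count a with hm₀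
  set m₂ := (u ++ v).count (a + 2) with hm₂
  -- counts of l, l'
  have cl0 : l.count a = m₀ + 1 := by
    simp only [hL, hm₀, List.count_append, List.count_cons, List.count_nil, beq_iff_eq]
    split_ifs <;> omega
  have cl2 : l.count (a + 2) = m₂ + 1 := by
    simp only [hL, hm₂, List.count_append, List.count_cons, List.count_nil, beq_iff_eq]
    split_ifs <;> omega
  have cl1 : l.count (a + 1) = (u ++ v).count (a + 1) := by
    simp only [hL, List.count_append, List.count_cons, List.count_nil, beq_iff_eq]
    split_ifs <;> omega
  have cl'0 : l'.count a = m₀ := by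
    simp only [hL', hm₀, List.count_append, List.count_cons, List.count_nil, beq_iff_eq]
    split_ifs <;> omega
  have cl'2 : l'.count (a + 2) = m₂ := by
    simp only [hL', hm₂, List.count_append, List.count_cons, List.count_nil, beq_iff_eq]
    split_ifs <;> omega
  have cl'1 : l'.count (a + 1) = (u ++ v).count (a + 1) + 2 := by
    simp only [hL', List.count_append, List.count_cons, List.count_nil, beq_iff_eq]
    split_ifs <;> omega
  have hm1 : (u ++ v).count (a + 1) = 0 := by have := hcnt' (a + 1); omega
  have hm0 : m₀ ≤ 1 := by have := hcnt a; omega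
  have hm2 : m₂ ≤ 1 := by have := hcnt (a + 2); omega
  have hother : ∀ y, y ≠ a → y ≠ a + 1 → y ≠ a + 2 → l.count y = l'.count y := by
    intro y h0 h1 h2
    simp only [hL, hL', List.count_append, List.count_cons, List.count_nil, beq_iff_eq]
    split_ifs <;> omega
  set b := t - (a + 2) with hb
  have hb0 : t - b = a + 2 := by omega
  have hb1 : t - (b + 1) = a + 1 := by omega
  have hb2 : t - (b + 2) = a := by omega
  set f : List ℕ → ℕ → List ℕ := fun L x => List.replicate (2 - L.count (t - x)) x with hf
  have hr : List.range (t + 1) =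
      (List.range b ++ [b, b + 1, b + 2]) ++ (List.range a).map (fun x => b + 3 + x) := by
    have h1 : t + 1 = (b + 3) + a := by omega
    rw [h1, List.range_add, List.range_add]
    simp [List.range_succ]
  set W : List ℕ := (List.range b).flatMap (f l) with hW
  set T : List ℕ := ((List.range a).map (fun x => b + 3 + x)).flatMap (f l) with hT
  have hWeq : (List.range b).flatMap (f l') = W := by
    rw [hW]
    refine (List.flatMap_congr ?_).symm
    intro x hx
    rw [List.mem_range] at hx
    have : l.count (t - x) = l'.count (t - x) := hother _ (by omega) (by omega) (by omega)
    simp [hf, this]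
  have hTeq : ((List.range a).map (fun x => b + 3 + x)).flatMap (f l') = T := by
    rw [hT]
    refine (List.flatMap_congr ?_).symm
    intro x hx
    simp only [List.mem_map, List.mem_range] at hx
    obtain ⟨i, hi, rfl⟩ := hx
    have : l.count (t - (b + 3 + i)) = l'.count (t - (b + 3 + i)) :=
      hother _ (by omega) (by omega) (by omega)
    simp [hf, this]
  set n₀ := 1 - m₀ with hn₀
  set n₂ := 1 - m₂ with hn₂
  have El : complB t l = (W ++ List.replicate n₂ b) ++ [b + 1, b + 1] ++
      (List.replicate n₀ (b + 2) ++ T) := by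
    rw [complB, hr, List.flatMap_append, List.flatMap_append]
    have e1 : (2 - l.count (t - b)) = n₂ := by rw [hb0, cl2]; omega
    have e2 : (2 - l.count (t - (b + 1))) = 2 := by rw [hb1, cl1, hm1]
    have e3 : (2 - l.count (t - (b + 2))) = n₀ := by rw [hb2, cl0]; omega
    simp only [List.flatMap_cons, List.flatMap_nil, hf, e1, e2, e3]
    simp [hW, hT, hf, List.replicate_succ]
  have El' : complB t l' = (W ++ List.replicate n₂ b) ++ [b, b + 2] ++
      (List.replicate n₀ (b + 2) ++ T) := by
    rw [complB, hr, List.flatMap_append, List.flatMap_append]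
    have e1 : (2 - l'.count (t - b)) = n₂ + 1 := by rw [hb0, cl'2]; omega
    have e2 : (2 - l'.count (t - (b + 1))) = 0 := by rw [hb1, cl'1, hm1]
    have e3 : (2 - l'.count (t - (b + 2))) = n₀ + 1 := by rw [hb2, cl'0]; omega
    simp only [List.flatMap_cons, List.flatMap_nil, hf, e1, e2, e3]
    rw [List.replicate_succ' (n := n₂) (a := b), List.replicate_succ (a := b + 2) (n := n₀)]
    simp only [hWeq, hTeq, List.replicate_zero]
    simp
    rw [← hWeq, ← hTeq]
  exact ⟨b, W ++ List.replicate n₂ b, List.replicate n₀ (b + 2) ++ T, El', by rw [El]; simp⟩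
end
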